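/- arXiv:2505.23348 — 4 statements merged into one kernel-verified Lean document; each statement's English description precedes it below -/
import Mathlib

section
/- Let n ≥ 3, let Ω ⊆ ℝⁿ be an open connected set, and let u ∈ C^∞(Ω;ℝⁿ) satisfy ℰ_d u = 0 on Ω. Then there exist an n×n skew-symmetric real matrix A, a real number γ, and vectors s, b ∈ ℝⁿ such that u(y) = (A + γ·Id)y + s·|y|²/2 − (s·y)y + b for all y ∈ Ω. -/
open MeasureTheory Filter Topology

/-- `∂_j u_i (x)`: the `i`-th component of the partial derivative of `u` in direction `e_j`. -/
noncomputable def pdc {n : ℕ} (j i : Fin n) (u : (Fin n → ℝ) → (Fin n → ℝ))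
    (x : Fin n → ℝ) : ℝ :=
  fderiv ℝ u x (Pi.single j 1) i

/-- Divergence of a vector field. -/
noncomputable def divg {n : ℕ} (u : (Fin n → ℝ) → (Fin n → ℝ)) (x : Fin n → ℝ) : ℝ :=
  ∑ i, pdc i i u x

/-- The deviatoric symmetric gradient
`ℰ_d u := (∇u + (∇u)ᵀ)/2 − (div u / n)·Id`, as an `n × n` matrix field. -/
noncomputable def Ed {n : ℕ} (u : (Fin n → ℝ) → (Fin n → ℝ)) (x : Fin n → ℝ)
    (i j : Fin n) : ℝ :=
  (pdc j i u x + pdc i j u x) / 2 - (divg u x / (n : ℝ)) * (if i = j then 1 else 0)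

/-! ### Auxiliary lemmas -/

lemma clm_apply_eq_sum {n : ℕ} (L : (Fin n → ℝ) →L[ℝ] ℝ) (v : Fin n → ℝ) :
    L v = ∑ j, v j * L (Pi.single j 1) := by
  have hv : v = ∑ j, v j • (Pi.single j 1 : Fin n → ℝ) := by
    funext k
    simp [Finset.sum_apply, Pi.single_apply, Finset.sum_ite_eq, mul_comm]
  conv_lhs => rw [hv]
  rw [map_sum]
  simp [smul_eq_mul]

lemma const_on_of_fderiv_zero {n : ℕ} {Ω : Set (Fin n → ℝ)} (ho : IsOpen Ω)
    (hc : IsPreconnected Ω) {f : (Fin n → ℝ) → ℝ}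
    (hd : ∀ x ∈ Ω, DifferentiableAt ℝ f x) (h0 : ∀ x ∈ Ω, fderiv ℝ f x = 0)
    {x y : Fin n → ℝ} (hx : x ∈ Ω) (hy : y ∈ Ω) : f x = f y := by
  haveI : PreconnectedSpace Ω := Subtype.preconnectedSpace hc
  have hloc : IsLocallyConstant (fun z : Ω => f z) := by
    rw [IsLocallyConstant.iff_eventually_eq]
    intro z
    obtain ⟨ε, hε, hball⟩ := Metric.isOpen_iff.1 ho z z.2
    have hconst : ∀ w ∈ Metric.ball (z : Fin n → ℝ) ε, f w = f z := by
      intro w hw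
      refine (convex_ball _ _).is_const_of_fderivWithin_eq_zero
        (fun p hp => (hd p (hball hp)).differentiableWithinAt) ?_ hw (Metric.mem_ball_self hε)
      intro p hp
      rw [fderivWithin_of_isOpen Metric.isOpen_ball hp]
      exact h0 p (hball hp)
    have hmem : (Subtype.val) ⁻¹' Metric.ball (z : Fin n → ℝ) ε ∈ 𝓝 z :=
      continuous_subtype_val.continuousAt.preimage_mem_nhds (Metric.ball_mem_nhds _ hε)
    filter_upwards [hmem] with w hw
    exact hconst w hw
  exact hloc.apply_eq_of_preconnectedSpace ⟨x, hx⟩ ⟨y, hy⟩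

lemma exists_third {n : ℕ} (hn : 3 ≤ n) (a b : Fin n) : ∃ c, c ≠ a ∧ c ≠ b := by
  by_contra h
  push_neg at h
  have hsub : (Finset.univ : Finset (Fin n)) ⊆ {a, b} := by
    intro c _
    rcases eq_or_ne c a with rfl | hca
    · simp
    · simp [h c hca]
  have := Finset.card_le_card hsub
  have hcard : ({a, b} : Finset (Fin n)).card ≤ 2 := Finset.card_insert_le _ _ |>.trans (by simp)
  simp [Finset.card_univ] at this
  omega

lemma comp_clm_contDiffAt {E F G : Type*} [NormedAddCommGroup E] [NormedSpace ℝ E]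
    [NormedAddCommGroup F] [NormedSpace ℝ F] [NormedAddCommGroup G] [NormedSpace ℝ G]
    (L : F →L[ℝ] G) {f : E → F} {x : E} (hf : ContDiffAt ℝ (⊤:ℕ∞) f x) :
    ContDiffAt ℝ (⊤:ℕ∞) (fun y => L (f y)) x :=
  L.contDiff.contDiffAt.comp x hf

lemma comp_clm_fderiv {E F G : Type*} [NormedAddCommGroup E] [NormedSpace ℝ E]
    [NormedAddCommGroup F] [NormedSpace ℝ F] [NormedAddCommGroup G] [NormedSpace ℝ G]
    (L : F →L[ℝ] G) {f : E → F} {x : E} (hf : DifferentiableAt ℝ f x) (v : E) :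
    fderiv ℝ (fun y => L (f y)) x v = L (fderiv ℝ f x v) := by
  have h := (L.hasFDerivAt.comp x hf.hasFDerivAt).fderiv
  rw [show (fun y => L (f y)) = ⇑L ∘ f from rfl, h]
  rfl

/-- `φ = div u / n`. -/
noncomputable def phifun {n : ℕ} (u : (Fin n → ℝ) → (Fin n → ℝ)) (x : Fin n → ℝ) : ℝ :=
  divg u x / n

/-- second partials of `u`. -/
noncomputable def S2 {n : ℕ} (u : (Fin n → ℝ) → (Fin n → ℝ)) (k j i : Fin n)
    (x : Fin n → ℝ) : ℝ :=
  fderiv ℝ (fderiv ℝ u) x (Pi.single k 1) (Pi.single j 1) i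

/-- first partials of `φ`. -/
noncomputable def pgrad {n : ℕ} (u : (Fin n → ℝ) → (Fin n → ℝ)) (m : Fin n)
    (x : Fin n → ℝ) : ℝ :=
  fderiv ℝ (phifun u) x (Pi.single m 1)

/-- second partials of `φ`. -/
noncomputable def P2 {n : ℕ} (u : (Fin n → ℝ) → (Fin n → ℝ)) (a b : Fin n)
    (x : Fin n → ℝ) : ℝ :=
  fderiv ℝ (fderiv ℝ (phifun u)) x (Pi.single a 1) (Pi.single b 1)

/-- third partials of `u`. -/
noncomputable def T3 {n : ℕ} (u : (Fin n → ℝ) → (Fin n → ℝ)) (l k j i : Fin n)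
    (x : Fin n → ℝ) : ℝ :=
  fderiv ℝ (fderiv ℝ (fderiv ℝ u)) x (Pi.single l 1) (Pi.single k 1) (Pi.single j 1) i


set_option maxHeartbeats 2000000 in
/-- kernel structure: if `n ≥ 3`, `Ω ⊆ ℝⁿ` is open and connected,
`u ∈ C^∞(Ω; ℝⁿ)` and `ℰ_d u = 0` on `Ω`, then
`u(y) = (A + γ·Id) y + s·|y|²/2 − (s·y) y + b` on `Ω` for some skew-symmetric `A`,
`γ ∈ ℝ` and `s, b ∈ ℝⁿ`. -/
theorem deviatoric_kernel_structure {n : ℕ} (hn : 3 ≤ n) (Ω : Set (Fin n → ℝ))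
    (hΩopen : IsOpen Ω) (hΩconn : IsConnected Ω)
    (u : (Fin n → ℝ) → (Fin n → ℝ)) (hu : ContDiffOn ℝ (⊤ : ℕ∞) u Ω)
    (hEd : ∀ x ∈ Ω, ∀ i j, Ed u x i j = 0) :
    ∃ (A : Fin n → Fin n → ℝ) (γ : ℝ) (s b : Fin n → ℝ),
      (∀ i j, A i j = - A j i) ∧
      ∀ y ∈ Ω, ∀ i, u y i =
        ((∑ j, A i j * y j) + γ * y i) + s i * ((∑ j, y j * y j) / 2)
          - (∑ j, s j * y j) * y i + b i := by
  classical
  obtain ⟨x₀, hx₀⟩ := hΩconn.nonempty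
  have hpre : IsPreconnected Ω := hΩconn.isPreconnected
  have hone : (1 : WithTop ℕ∞) ≤ ((⊤:ℕ∞) : WithTop ℕ∞) := by
    rw [show ((1:WithTop ℕ∞)) = (((1:ℕ∞)) : WithTop ℕ∞) from rfl, WithTop.coe_le_coe]
    exact le_top
  have htwo : (2 : WithTop ℕ∞) ≤ ((⊤:ℕ∞) : WithTop ℕ∞) := by
    rw [show ((2:WithTop ℕ∞)) = (((2:ℕ∞)) : WithTop ℕ∞) from rfl, WithTop.coe_le_coe]
    exact le_top
  have hat : ∀ x ∈ Ω, ContDiffAt ℝ (⊤:ℕ∞) u x :=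
    fun x hx => hu.contDiffAt (hΩopen.mem_nhds hx)
  have hDu : ∀ x ∈ Ω, ContDiffAt ℝ (⊤:ℕ∞) (fderiv ℝ u) x :=
    fun x hx => (hat x hx).fderiv_right (by simp)
  have hD2u : ∀ x ∈ Ω, ContDiffAt ℝ (⊤:ℕ∞) (fderiv ℝ (fderiv ℝ u)) x :=
    fun x hx => (hDu x hx).fderiv_right (by simp)
  -- smoothness of first partials
  have hpdc_eq : ∀ (i j : Fin n), pdc j i u =
      fun y => ((ContinuousLinearMap.proj (R := ℝ) (φ := fun _ : Fin n => ℝ) i).comp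
        (ContinuousLinearMap.apply ℝ (Fin n → ℝ) (Pi.single j 1))) (fderiv ℝ u y) := fun _ _ => rfl
  have hpdcCD : ∀ (i j : Fin n), ∀ x ∈ Ω, ContDiffAt ℝ (⊤:ℕ∞) (pdc j i u) x := by
    intro i j x hx
    rw [hpdc_eq i j]
    exact comp_clm_contDiffAt _ (hDu x hx)
  have hpdcD : ∀ (i j : Fin n), ∀ x ∈ Ω, DifferentiableAt ℝ (pdc j i u) x :=
    fun i j x hx => (hpdcCD i j x hx).differentiableAt (by simp)
  have hDpdc : ∀ (i j : Fin n), ∀ x ∈ Ω, ∀ v,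
      fderiv ℝ (pdc j i u) x v = fderiv ℝ (fderiv ℝ u) x v (Pi.single j 1) i := by
    intro i j x hx v
    rw [hpdc_eq i j, comp_clm_fderiv _ ((hDu x hx).differentiableAt (by simp)) v]
    rfl
  -- smoothness of φ
  have hφCD : ∀ x ∈ Ω, ContDiffAt ℝ (⊤:ℕ∞) (phifun u) x := by
    intro x hx
    have : ContDiffAt ℝ (⊤:ℕ∞) (fun y => (∑ i, pdc i i u y) / (n:ℝ)) x := by
      exact (ContDiffAt.sum (fun i _ => hpdcCD i i x hx)).div_const _
    exact this
  have hφD : ∀ x ∈ Ω, DifferentiableAt ℝ (phifun u) x :=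
    fun x hx => (hφCD x hx).differentiableAt (by simp)
  have hDφ : ∀ x ∈ Ω, ContDiffAt ℝ (⊤:ℕ∞) (fderiv ℝ (phifun u)) x :=
    fun x hx => (hφCD x hx).fderiv_right (by simp)
  -- pgrad smoothness and derivative
  have hpgrad_eq : ∀ m : Fin n, pgrad u m =
      fun y => (ContinuousLinearMap.apply ℝ ℝ (Pi.single m 1)) (fderiv ℝ (phifun u) y) :=
    fun _ => rfl
  have hpgradCD : ∀ (m : Fin n), ∀ x ∈ Ω, ContDiffAt ℝ (⊤:ℕ∞) (pgrad u m) x := by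
    intro m x hx; rw [hpgrad_eq m]; exact comp_clm_contDiffAt _ (hDφ x hx)
  have hpgradD : ∀ (m : Fin n), ∀ x ∈ Ω, DifferentiableAt ℝ (pgrad u m) x :=
    fun m x hx => (hpgradCD m x hx).differentiableAt (by simp)
  have hDpgrad : ∀ (m : Fin n), ∀ x ∈ Ω, ∀ v,
      fderiv ℝ (pgrad u m) x v = fderiv ℝ (fderiv ℝ (phifun u)) x v (Pi.single m 1) := by
    intro m x hx v
    rw [hpgrad_eq m, comp_clm_fderiv _ ((hDφ x hx).differentiableAt (by simp)) v]
    rfl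
  -- the basic relation
  have R1 : ∀ x ∈ Ω, ∀ i j, pdc j i u x + pdc i j u x
      = 2 * (if i = j then 1 else 0) * phifun u x := by
    intro x hx i j
    have h := hEd x hx i j
    unfold Ed at h
    unfold phifun
    nlinarith [h]
  -- Schwarz symmetry for u
  have hSym2 : ∀ x ∈ Ω, ∀ v w, fderiv ℝ (fderiv ℝ u) x v w = fderiv ℝ (fderiv ℝ u) x w v :=
    fun x hx => (hat x hx).isSymmSndFDerivAt (by rw [minSmoothness_of_isRCLikeNormedField]; exact htwo)
  -- Schwarz symmetry for φ
  have hSymφ : ∀ x ∈ Ω, ∀ a b, P2 u a b x = P2 u b a x :=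
    fun x hx a b => (hφCD x hx).isSymmSndFDerivAt (by rw [minSmoothness_of_isRCLikeNormedField]; exact htwo) _ _
  -- differentiated relation
  have R2 : ∀ x ∈ Ω, ∀ i j k, S2 u k j i x + S2 u k i j x
      = 2 * (if i = j then 1 else 0) * pgrad u k x := by
    intro x hx i j k
    have hev : (fun y => pdc j i u y + pdc i j u y)
        =ᶠ[nhds x] (fun y => ((2:ℝ) * (if i = j then 1 else 0)) * phifun u y) := by
      filter_upwards [hΩopen.mem_nhds hx] with y hy
      have := R1 y hy i j
      ring_nf
      ring_nf at this
      linarith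
    have hfd := Filter.EventuallyEq.fderiv_eq (𝕜 := ℝ) hev
    have hL : fderiv ℝ (fun y => pdc j i u y + pdc i j u y) x
        = fderiv ℝ (pdc j i u) x + fderiv ℝ (pdc i j u) x :=
      fderiv_add (hpdcD i j x hx) (hpdcD j i x hx)
    have hR : fderiv ℝ (fun y => ((2:ℝ) * (if i = j then 1 else 0)) * phifun u y) x
        = ((2:ℝ) * (if i = j then 1 else 0)) • fderiv ℝ (phifun u) x :=
      fderiv_const_mul (hφD x hx) _
    have h2 : (fderiv ℝ (pdc j i u) x + fderiv ℝ (pdc i j u) x) (Pi.single k 1)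
        = (((2:ℝ) * (if i = j then 1 else 0)) • fderiv ℝ (phifun u) x) (Pi.single k 1) := by
      rw [← hL, ← hR, hfd]
    rw [ContinuousLinearMap.add_apply, hDpdc j i x hx, hDpdc i j x hx] at h2
    rw [ContinuousLinearMap.smul_apply] at h2
    unfold S2 pgrad
    rw [h2, smul_eq_mul]
  have R3 : ∀ x ∈ Ω, ∀ i j k, S2 u k j i x
      = (if i = j then 1 else 0) * pgrad u k x + (if i = k then 1 else 0) * pgrad u j x
        - (if j = k then 1 else 0) * pgrad u i x := by
    intro x hx i j k
    have h1 := R2 x hx i j k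
    have h2 := R2 x hx i k j
    have h3 := R2 x hx j k i
    have hs1 : S2 u k i j x = S2 u i k j x :=
      congrFun (hSym2 x hx (Pi.single k 1) (Pi.single i 1)) j
    have hs2 : S2 u j i k x = S2 u i j k x :=
      congrFun (hSym2 x hx (Pi.single j 1) (Pi.single i 1)) k
    have hs3 : S2 u j k i x = S2 u k j i x :=
      congrFun (hSym2 x hx (Pi.single j 1) (Pi.single k 1)) i
    unfold S2 at *
    linarith
  -- S2 as CLM composed with second derivative
  have hS2_eq : ∀ (i j k : Fin n), S2 u k j i =
      fun y => ((ContinuousLinearMap.proj (R := ℝ) (φ := fun _ : Fin n => ℝ) i).comp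
        ((ContinuousLinearMap.apply ℝ (Fin n → ℝ) (Pi.single j 1)).comp
          (ContinuousLinearMap.apply ℝ ((Fin n → ℝ) →L[ℝ] (Fin n → ℝ)) (Pi.single k 1))))
        (fderiv ℝ (fderiv ℝ u) y) := fun _ _ _ => rfl
  have hS2D : ∀ (i j k : Fin n), ∀ x ∈ Ω, DifferentiableAt ℝ (S2 u k j i) x := by
    intro i j k x hx
    rw [hS2_eq i j k]
    exact (comp_clm_contDiffAt _ (hD2u x hx)).differentiableAt (by simp)
  have hDS2 : ∀ (i j k : Fin n), ∀ x ∈ Ω, ∀ v, fderiv ℝ (S2 u k j i) x v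
      = fderiv ℝ (fderiv ℝ (fderiv ℝ u)) x v (Pi.single k 1) (Pi.single j 1) i := by
    intro i j k x hx v
    rw [hS2_eq i j k, comp_clm_fderiv _ ((hD2u x hx).differentiableAt (by simp)) v]
    rfl
  -- symmetry of third derivatives in the first two indices
  have hSym3 : ∀ x ∈ Ω, ∀ v w, fderiv ℝ (fderiv ℝ (fderiv ℝ u)) x v w
      = fderiv ℝ (fderiv ℝ (fderiv ℝ u)) x w v :=
    fun x hx => (hDu x hx).isSymmSndFDerivAt (by rw [minSmoothness_of_isRCLikeNormedField]; exact htwo)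
  -- differentiate R3
  have R4 : ∀ x ∈ Ω, ∀ i j k l, T3 u l k j i x
      = (if i = j then 1 else 0) * P2 u l k x + (if i = k then 1 else 0) * P2 u l j x
        - (if j = k then 1 else 0) * P2 u l i x := by
    intro x hx i j k l
    have hev : S2 u k j i =ᶠ[nhds x] (fun y =>
        ((if i = j then (1:ℝ) else 0) * pgrad u k y + (if i = k then (1:ℝ) else 0) * pgrad u j y)
          - (if j = k then (1:ℝ) else 0) * pgrad u i y) := by
      filter_upwards [hΩopen.mem_nhds hx] with y hy
      have := R3 y hy i j k
      simpa using this
    have hfd := Filter.EventuallyEq.fderiv_eq (𝕜 := ℝ) hev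
    have hd1 : DifferentiableAt ℝ (fun y => (if i = j then (1:ℝ) else 0) * pgrad u k y) x :=
      (hpgradD k x hx).const_mul _
    have hd2 : DifferentiableAt ℝ (fun y => (if i = k then (1:ℝ) else 0) * pgrad u j y) x :=
      (hpgradD j x hx).const_mul _
    have hd3 : DifferentiableAt ℝ (fun y => (if j = k then (1:ℝ) else 0) * pgrad u i y) x :=
      (hpgradD i x hx).const_mul _
    have hR : fderiv ℝ (fun y =>
        ((if i = j then (1:ℝ) else 0) * pgrad u k y + (if i = k then (1:ℝ) else 0) * pgrad u j y)
          - (if j = k then (1:ℝ) else 0) * pgrad u i y) x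
        = (fderiv ℝ (fun y => (if i = j then (1:ℝ) else 0) * pgrad u k y) x
            + fderiv ℝ (fun y => (if i = k then (1:ℝ) else 0) * pgrad u j y) x)
          - fderiv ℝ (fun y => (if j = k then (1:ℝ) else 0) * pgrad u i y) x := by
      rw [fderiv_fun_sub (hd1.fun_add hd2) hd3, fderiv_fun_add hd1 hd2]
    have happ : fderiv ℝ (S2 u k j i) x (Pi.single l 1)
        = ((fderiv ℝ (fun y => (if i = j then (1:ℝ) else 0) * pgrad u k y) x
            + fderiv ℝ (fun y => (if i = k then (1:ℝ) else 0) * pgrad u j y) x)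
          - fderiv ℝ (fun y => (if j = k then (1:ℝ) else 0) * pgrad u i y) x) (Pi.single l 1) := by
      rw [← hR, hfd]
    rw [hDS2 i j k x hx] at happ
    rw [ContinuousLinearMap.sub_apply, ContinuousLinearMap.add_apply] at happ
    rw [fderiv_const_mul (hpgradD k x hx), fderiv_const_mul (hpgradD j x hx),
      fderiv_const_mul (hpgradD i x hx)] at happ
    simp only [ContinuousLinearMap.smul_apply, smul_eq_mul] at happ
    rw [hDpgrad k x hx, hDpgrad j x hx, hDpgrad i x hx] at happ
    unfold T3 P2
    rw [happ]
  -- the Hessian of φ vanishes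
  have hψ0 : ∀ x ∈ Ω, ∀ a b, P2 u a b x = 0 := by
    intro x hx
    have key : ∀ i j k l : Fin n,
        (if i = j then (1:ℝ) else 0) * P2 u l k x + (if i = k then (1:ℝ) else 0) * P2 u l j x
          - (if j = k then (1:ℝ) else 0) * P2 u l i x
        = (if i = j then (1:ℝ) else 0) * P2 u k l x + (if i = l then (1:ℝ) else 0) * P2 u k j x
          - (if j = l then (1:ℝ) else 0) * P2 u k i x := by
      intro i j k l
      have h4a := R4 x hx i j k l
      have h4b := R4 x hx i j l k
      have hsym : T3 u l k j i x = T3 u k l j i x := by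
        unfold T3
        rw [hSym3 x hx (Pi.single l 1) (Pi.single k 1)]
      unfold T3 at hsym h4a h4b
      linarith
    intro a b
    rcases eq_or_ne a b with rfl | hab
    · -- diagonal case
      obtain ⟨c, hca, -⟩ := exists_third hn a a
      obtain ⟨d, hda, hdc⟩ := exists_third hn a c
      have h1 := key c a c a
      have h2 := key d c d c
      have h3 := key d a d a
      simp only [if_pos rfl, if_neg hca, if_neg (Ne.symm hca), if_neg hda,
        if_neg (Ne.symm hda), if_neg hdc, if_neg (Ne.symm hdc), eq_self_iff_true,
        if_true, zero_mul, one_mul] at h1 h2 h3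
      have hs1 := hSymφ x hx a c
      have hs2 := hSymφ x hx c d
      have hs3 := hSymφ x hx a d
      linarith
    · obtain ⟨c, hca, hcb⟩ := exists_third hn a b
      have h1 := key c b c a
      simp only [if_pos rfl, if_neg hca, if_neg (Ne.symm hca), if_neg hcb,
        if_neg (Ne.symm hcb), if_neg (Ne.symm hab), eq_self_iff_true,
        if_true, zero_mul, one_mul] at h1
      linarith
  -- the gradient of φ is constant on Ω
  have hpconst : ∀ (m : Fin n), ∀ x ∈ Ω, pgrad u m x = pgrad u m x₀ := by
    intro m x hx
    refine const_on_of_fderiv_zero hΩopen hpre (hpgradD m) ?_ hx hx₀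
    intro z hz
    have hz0 : ∀ l, fderiv ℝ (pgrad u m) z (Pi.single l 1) = 0 := by
      intro l
      rw [hDpgrad m z hz]
      exact hψ0 z hz l m
    refine ContinuousLinearMap.ext fun v => ?_
    rw [ContinuousLinearMap.zero_apply, clm_apply_eq_sum]
    simp [hz0]
  set c : Fin n → ℝ := fun m => pgrad u m x₀ with hc
  set s : Fin n → ℝ := fun m => - pgrad u m x₀ with hs
  -- affine formula for first partials
  have hAff : ∀ (i j : Fin n), ∀ x ∈ Ω, pdc j i u x = pdc j i u x₀
      + ∑ k, ((if i = j then (1:ℝ) else 0) * c k + (if i = k then (1:ℝ) else 0) * c j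
        - (if j = k then (1:ℝ) else 0) * c i) * (x k - x₀ k) := by
    intro i j x hx
    set C : Fin n → ℝ := fun k => (if i = j then (1:ℝ) else 0) * c k
      + (if i = k then (1:ℝ) else 0) * c j - (if j = k then (1:ℝ) else 0) * c i with hC
    have hlin : ∀ y : Fin n → ℝ, HasFDerivAt (fun y : Fin n → ℝ => ∑ k, C k * y k)
        (∑ k, C k • ContinuousLinearMap.proj (R := ℝ) (φ := fun _ : Fin n => ℝ) k) y :=
      fun y => HasFDerivAt.fun_sum fun k _ => (hasFDerivAt_apply k y).const_mul (C k)
    have hSconst : ∀ z ∈ Ω, ∀ l, fderiv ℝ (pdc j i u) z (Pi.single l 1) = C l := by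
      intro z hz l
      rw [hDpdc i j z hz]
      have h3 := R3 z hz i j l
      unfold S2 at h3
      rw [h3, hpconst l z hz, hpconst j z hz, hpconst i z hz]
    have hq := const_on_of_fderiv_zero (f := fun y => pdc j i u y - ∑ k, C k * y k)
      hΩopen hpre (fun p hp => (hpdcD i j p hp).sub (hlin p).differentiableAt) ?_ hx hx₀
    · have hsum : ∑ k, C k * (x k - x₀ k) = (∑ k, C k * x k) - ∑ k, C k * x₀ k := by
        rw [← Finset.sum_sub_distrib]
        exact Finset.sum_congr rfl fun k _ => by ring
      linarith [hq, hsum]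
    · intro p hp
      have hfd : fderiv ℝ (fun y => pdc j i u y - ∑ k, C k * y k) p
          = fderiv ℝ (pdc j i u) p - fderiv ℝ (fun y : Fin n → ℝ => ∑ k, C k * y k) p :=
        fderiv_fun_sub (hpdcD i j p hp) (hlin p).differentiableAt
      have hz0 : ∀ l, fderiv ℝ (fun y => pdc j i u y - ∑ k, C k * y k) p (Pi.single l 1) = 0 := by
        intro l
        rw [hfd, ContinuousLinearMap.sub_apply, hSconst p hp l, (hlin p).fderiv]
        simp [ContinuousLinearMap.proj_apply, Pi.single_apply, Finset.sum_ite_eq,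
          mul_ite, mul_one, mul_zero]
      refine ContinuousLinearMap.ext fun v => ?_
      rw [ContinuousLinearMap.zero_apply, clm_apply_eq_sum]
      simp [hz0]
  set γ : ℝ := phifun u x₀ + ∑ m, s m * x₀ m with hγ
  set A : Fin n → Fin n → ℝ := fun i j => pdc j i u x₀ - (γ * (if i = j then 1 else 0)
    + s i * x₀ j - s j * x₀ i - (∑ m, s m * x₀ m) * (if i = j then 1 else 0)) with hA
  set b : Fin n → ℝ := fun i => u x₀ i - (((∑ j, A i j * x₀ j) + γ * x₀ i)
    + s i * ((∑ j, x₀ j * x₀ j)/2) - (∑ j, s j * x₀ j) * x₀ i) with hb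
  refine ⟨A, γ, s, b, ?_, ?_⟩
  · -- skew-symmetry
    intro i j
    have h := R1 x₀ hx₀ i j
    rcases eq_or_ne i j with rfl | hij
    · simp only [if_pos rfl, eq_self_iff_true, if_true, mul_one] at h
      simp only [hA, if_pos rfl, eq_self_iff_true, if_true, mul_one]
      linarith [h, hγ]
    · simp only [if_neg hij, mul_zero, zero_mul] at h
      simp only [hA, if_neg hij, if_neg (Ne.symm hij), mul_zero, sub_zero, zero_sub]
      linarith [h]
  · -- the representation formula
    intro y hy i
    have hmatch : ∀ x ∈ Ω, ∀ j, pdc j i u x = A i j + γ * (if i = j then 1 else 0)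
        + s i * x j - s j * x i - (∑ m, s m * x m) * (if i = j then 1 else 0) := by
      intro x hx j
      rw [hAff i j x hx]
      have hterm : ∀ k : Fin n, ((if i = j then (1:ℝ) else 0) * c k
          + (if i = k then (1:ℝ) else 0) * c j - (if j = k then (1:ℝ) else 0) * c i)
            * (x k - x₀ k)
          = (if i = j then (1:ℝ) else 0) * (c k * (x k - x₀ k))
            + (if i = k then (1:ℝ) else 0) * (c j * (x k - x₀ k))
            - (if j = k then (1:ℝ) else 0) * (c i * (x k - x₀ k)) := fun k => by ring
      have hsum : ∑ k, ((if i = j then (1:ℝ) else 0) * c k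
          + (if i = k then (1:ℝ) else 0) * c j - (if j = k then (1:ℝ) else 0) * c i)
            * (x k - x₀ k)
          = (if i = j then (1:ℝ) else 0) * (∑ k, c k * (x k - x₀ k))
            + c j * (x i - x₀ i) - c i * (x j - x₀ j) := by
        have e1 : ∑ k, (if i = j then (1:ℝ) else 0) * (c k * (x k - x₀ k))
            = (if i = j then (1:ℝ) else 0) * ∑ k, c k * (x k - x₀ k) :=
          (Finset.mul_sum _ _ _).symm
        have e2 : ∑ k, (if i = k then (1:ℝ) else 0) * (c j * (x k - x₀ k))
            = c j * (x i - x₀ i) := by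
          simp [ite_mul]
        have e3 : ∑ k, (if j = k then (1:ℝ) else 0) * (c i * (x k - x₀ k))
            = c i * (x j - x₀ j) := by
          simp [ite_mul]
        rw [Finset.sum_congr rfl fun k _ => hterm k, Finset.sum_sub_distrib,
          Finset.sum_add_distrib, e1, e2, e3]
      rw [hsum]
      have hsplit : ∑ k, c k * (x k - x₀ k) = (∑ m, s m * x₀ m) - (∑ m, s m * x m) := by
        rw [← Finset.sum_sub_distrib]
        refine Finset.sum_congr rfl fun k _ => ?_
        simp only [hc, hs]
        ring
      rw [hsplit]
      simp only [hA, hc, hs]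
      ring
    -- derivative of the polynomial
    have hPder : ∀ p : Fin n → ℝ,
        HasFDerivAt (fun z : Fin n → ℝ => ((∑ j, A i j * z j) + γ * z i)
          + s i * ((∑ j, z j * z j)/2) - (∑ j, s j * z j) * z i + b i)
        ((∑ j, A i j • ContinuousLinearMap.proj (R := ℝ) (φ := fun _ : Fin n => ℝ) j)
          + γ • ContinuousLinearMap.proj (R := ℝ) (φ := fun _ : Fin n => ℝ) i
          + (s i / 2) • (∑ j, (p j • ContinuousLinearMap.proj (R := ℝ) (φ := fun _ : Fin n => ℝ) j
              + p j • ContinuousLinearMap.proj (R := ℝ) (φ := fun _ : Fin n => ℝ) j))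
          - ((∑ j, s j * p j) • ContinuousLinearMap.proj (R := ℝ) (φ := fun _ : Fin n => ℝ) i
              + p i • (∑ j, s j • ContinuousLinearMap.proj (R := ℝ) (φ := fun _ : Fin n => ℝ) j))) p := by
      intro p
      have hq1 : HasFDerivAt (fun z : Fin n → ℝ => ∑ j, A i j * z j)
          (∑ j, A i j • ContinuousLinearMap.proj (R := ℝ) (φ := fun _ : Fin n => ℝ) j) p :=
        HasFDerivAt.fun_sum fun j _ => (hasFDerivAt_apply j p).const_mul (A i j)
      have hq2 : HasFDerivAt (fun z : Fin n → ℝ => γ * z i)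
          (γ • ContinuousLinearMap.proj (R := ℝ) (φ := fun _ : Fin n => ℝ) i) p :=
        (hasFDerivAt_apply i p).const_mul γ
      have hq3a : HasFDerivAt (fun z : Fin n → ℝ => ∑ j, z j * z j)
          (∑ j, ((p j • ContinuousLinearMap.proj (R := ℝ) (φ := fun _ : Fin n => ℝ) j)
            + (p j • ContinuousLinearMap.proj (R := ℝ) (φ := fun _ : Fin n => ℝ) j))) p :=
        HasFDerivAt.fun_sum fun j _ => (hasFDerivAt_apply j p).mul (hasFDerivAt_apply j p)
      have hq3 := hq3a.const_mul (s i / 2)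
      have hq4a : HasFDerivAt (fun z : Fin n → ℝ => ∑ j, s j * z j)
          (∑ j, s j • ContinuousLinearMap.proj (R := ℝ) (φ := fun _ : Fin n => ℝ) j) p :=
        HasFDerivAt.fun_sum fun j _ => (hasFDerivAt_apply j p).const_mul (s j)
      have hq4 := hq4a.mul (hasFDerivAt_apply i p)
      have halt := (((hq1.add hq2).add hq3).sub hq4).add_const (b i)
      refine halt.congr_of_eventuallyEq (Filter.Eventually.of_forall fun z => ?_)
      simp only [Pi.add_apply, Pi.sub_apply, Pi.mul_apply]
      ring
    have hdiff1 : ∀ p ∈ Ω, DifferentiableAt ℝ (fun z => u z i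
        - (((∑ j, A i j * z j) + γ * z i) + s i * ((∑ j, z j * z j)/2)
          - (∑ j, s j * z j) * z i + b i)) p := by
      intro p hp
      have hup : DifferentiableAt ℝ u p := (hat p hp).differentiableAt (by simp)
      exact ((differentiableAt_pi.mp hup) i).sub (hPder p).differentiableAt
    have hdzero : ∀ p ∈ Ω, fderiv ℝ (fun z => u z i
        - (((∑ j, A i j * z j) + γ * z i) + s i * ((∑ j, z j * z j)/2)
          - (∑ j, s j * z j) * z i + b i)) p = 0 := by
      intro p hp
      have hup : DifferentiableAt ℝ u p := (hat p hp).differentiableAt (by simp)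
      have hui : DifferentiableAt ℝ (fun z => u z i) p := (differentiableAt_pi.mp hup) i
      have hui_fd : fderiv ℝ (fun z => u z i) p
          = (ContinuousLinearMap.proj (R := ℝ) (φ := fun _ : Fin n => ℝ) i).comp
              (fderiv ℝ u p) :=
        ((hasFDerivAt_apply (𝕜 := ℝ) i (u p)).comp p hup.hasFDerivAt).fderiv
      have hz0 : ∀ m, fderiv ℝ (fun z => u z i
          - (((∑ j, A i j * z j) + γ * z i) + s i * ((∑ j, z j * z j)/2)
            - (∑ j, s j * z j) * z i + b i)) p (Pi.single m 1) = 0 := by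
        intro m
        rw [fderiv_fun_sub hui (hPder p).differentiableAt, ContinuousLinearMap.sub_apply,
          hui_fd, (hPder p).fderiv]
        have hval : (ContinuousLinearMap.proj (R := ℝ) (φ := fun _ : Fin n => ℝ) i).comp
            (fderiv ℝ u p) (Pi.single m 1) = pdc m i u p := rfl
        rw [hval, hmatch p hp m]
        simp only [ContinuousLinearMap.add_apply, ContinuousLinearMap.sub_apply,
          ContinuousLinearMap.smul_apply, ContinuousLinearMap.sum_apply,
          ContinuousLinearMap.coe_smul', Pi.smul_apply, ContinuousLinearMap.proj_apply,
          Pi.single_apply, smul_eq_mul, mul_ite, mul_one, mul_zero, ite_mul, zero_mul,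
          Finset.sum_ite_eq, Finset.sum_ite_eq', Finset.mem_univ, if_true]
        have hs2 : ∑ x : Fin n, ((if x = m then p x else 0) + if x = m then p x else 0)
            = p m * 2 := by
          rw [Finset.sum_add_distrib]
          simp
          ring
        rw [hs2]
        ring
      refine ContinuousLinearMap.ext fun v => ?_
      rw [ContinuousLinearMap.zero_apply, clm_apply_eq_sum]
      simp [hz0]
    have hwconst := const_on_of_fderiv_zero (f := fun z => u z i
        - (((∑ j, A i j * z j) + γ * z i) + s i * ((∑ j, z j * z j)/2)
          - (∑ j, s j * z j) * z i + b i)) hΩopen hpre hdiff1 hdzero hy hx₀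
    have hbi : b i = u x₀ i - (((∑ j, A i j * x₀ j) + γ * x₀ i)
        + s i * ((∑ j, x₀ j * x₀ j)/2) - (∑ j, s j * x₀ j) * x₀ i) := by rw [hb]
    linarith [hwconst, hbi]
end

section
/- Let n ≥ 3. Define, for F ∈ C^∞(Ω; M_sym0), the fourth-order differential operator 𝒜 by (𝒜(F))_{jk} := Σ_{i,ℓ=1}^n (∂_{iijℓ}F_{kℓ} + ∂_{iikℓ}F_{ℓj}) − Σ_{i,ℓ=1}^n ∂_{iiℓℓ}F_{jk} − ((n−2)/(n−1))·Σ_{i,ℓ=1}^n ∂_{iℓjk}F_{iℓ} − (δ_{jk}/(n−1))·Σ_{i,ℓ,m=1}^n ∂_{iiℓm}F_{ℓm}, for j,k = 1,…,n. Then for every u ∈ C^∞(ℝⁿ;ℝⁿ) one has 𝒜(ℰ_d u) = 0, i.e. 𝒜 annihilates the deviatoric symmetric gradient. -/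
open MeasureTheory Filter Topology

/-- Partial derivative `∂_j f` of a scalar function on `ℝⁿ`. -/
noncomputable def pds {n : ℕ} (j : Fin n) (f : (Fin n → ℝ) → ℝ) : (Fin n → ℝ) → ℝ :=
  fun x => fderiv ℝ f x (Pi.single j 1)

variable {n : ℕ}
lemma top_add_one_le : ((⊤ : ℕ∞) : WithTop ℕ∞) + 1 ≤ ((⊤ : ℕ∞) : WithTop ℕ∞) := by norm_num
lemma two_le_top : (2 : WithTop ℕ∞) ≤ ((⊤ : ℕ∞) : WithTop ℕ∞) := by
  have : ((2:ℕ∞) : WithTop ℕ∞) ≤ ((⊤ : ℕ∞) : WithTop ℕ∞) := by exact_mod_cast le_top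
  simpa using this
lemma one_le_top : (1 : WithTop ℕ∞) ≤ ((⊤ : ℕ∞) : WithTop ℕ∞) := by
  have : ((1:ℕ∞) : WithTop ℕ∞) ≤ ((⊤ : ℕ∞) : WithTop ℕ∞) := by exact_mod_cast le_top
  simpa using this
lemma diffAt_of_smooth {E F : Type*} [NormedAddCommGroup E] [NormedSpace ℝ E]
    [NormedAddCommGroup F] [NormedSpace ℝ F] {f : E → F}
    (hf : ContDiff ℝ (⊤ : ℕ∞) f) (x : E) : DifferentiableAt ℝ f x :=
  (hf.differentiable (by simp)).differentiableAt
lemma contDiff_pds {f : (Fin n → ℝ) → ℝ} (hf : ContDiff ℝ (⊤ : ℕ∞) f) (i : Fin n) :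
    ContDiff ℝ (⊤ : ℕ∞) (pds i f) :=
  (hf.fderiv_right top_add_one_le).clm_apply contDiff_const
lemma pds_comm {f : (Fin n → ℝ) → ℝ} (hf : ContDiff ℝ (⊤ : ℕ∞) f) (a b : Fin n)
    (x : Fin n → ℝ) : pds a (pds b f) x = pds b (pds a f) x := by
  have hsymm : IsSymmSndFDerivAt ℝ f x := (hf.contDiffAt).isSymmSndFDerivAt (by simpa [minSmoothness_of_isRCLikeNormedField] using two_le_top)
  have hd : DifferentiableAt ℝ (fderiv ℝ f) x :=
    diffAt_of_smooth (hf.fderiv_right top_add_one_le) x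
  have key : ∀ v w : Fin n → ℝ,
      fderiv ℝ (fun y => fderiv ℝ f y v) x w = fderiv ℝ (fderiv ℝ f) x w v := by
    intro v w
    rw [fderiv_clm_apply hd (differentiableAt_const v)]
    simp
  show fderiv ℝ (fun y => fderiv ℝ f y (Pi.single b 1)) x (Pi.single a 1)
      = fderiv ℝ (fun y => fderiv ℝ f y (Pi.single a 1)) x (Pi.single b 1)
  rw [key, key, hsymm]
lemma pds_comb3 {F G H : (Fin n → ℝ) → ℝ} (hF : ContDiff ℝ (⊤ : ℕ∞) F)
    (hG : ContDiff ℝ (⊤ : ℕ∞) G) (hH : ContDiff ℝ (⊤ : ℕ∞) H)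
    (c1 c2 c3 : ℝ) (i : Fin n) :
    pds i (fun y => F y * c1 + G y * c2 + H y * c3)
      = fun y => pds i F y * c1 + pds i G y * c2 + pds i H y * c3 := by
  funext x
  show fderiv ℝ _ x _ = _
  rw [fderiv_fun_add (((diffAt_of_smooth hF x).mul_const c1).fun_add
      ((diffAt_of_smooth hG x).mul_const c2)) ((diffAt_of_smooth hH x).mul_const c3),
    fderiv_fun_add ((diffAt_of_smooth hF x).mul_const c1) ((diffAt_of_smooth hG x).mul_const c2),
    fderiv_mul_const (diffAt_of_smooth hF x), fderiv_mul_const (diffAt_of_smooth hG x),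
    fderiv_mul_const (diffAt_of_smooth hH x)]
  simp [pds, mul_comm]
lemma pds_sum {ι : Type*} (s : Finset ι) {F : ι → (Fin n → ℝ) → ℝ}
    (hF : ∀ m, ContDiff ℝ (⊤ : ℕ∞) (F m)) (i : Fin n) :
    pds i (fun y => ∑ m ∈ s, F m y) = fun y => ∑ m ∈ s, pds i (F m) y := by
  funext x
  show fderiv ℝ _ x _ = _
  rw [fderiv_fun_sum (fun m _ => diffAt_of_smooth (hF m) x)]
  simp [pds]
lemma contDiff_comp' {u : (Fin n → ℝ) → (Fin n → ℝ)} (hu : ContDiff ℝ (⊤ : ℕ∞) u)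
    (i : Fin n) : ContDiff ℝ (⊤ : ℕ∞) (fun y => u y i) :=
  (ContinuousLinearMap.proj (R := ℝ) (φ := fun _ : Fin n => ℝ) i).contDiff.comp hu
lemma pdc_eq {u : (Fin n → ℝ) → (Fin n → ℝ)} (hu : ContDiff ℝ (⊤ : ℕ∞) u)
    (j i : Fin n) (x : Fin n → ℝ) : pdc j i u x = pds j (fun y => u y i) x := by
  have h : (fun y => u y i)
      = (ContinuousLinearMap.proj (R := ℝ) (φ := fun _ : Fin n => ℝ) i) ∘ u := rfl
  show _ = fderiv ℝ _ x _
  rw [h, fderiv_comp x (ContinuousLinearMap.differentiableAt _) (diffAt_of_smooth hu x)]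
  simp [pdc, ContinuousLinearMap.fderiv]
lemma Ed_eq {u : (Fin n → ℝ) → (Fin n → ℝ)} (hu : ContDiff ℝ (⊤ : ℕ∞) u) (a b : Fin n) :
    (fun y => Ed u y a b)
      = fun y => pds b (fun z => u z a) y * (1/2) + pds a (fun z => u z b) y * (1/2)
          + (∑ m, pds m (fun z => u z m) y) * (-(if a = b then (1:ℝ) else 0) / n) := by
  funext y
  simp only [Ed, divg, pdc_eq hu]
  ring

noncomputable def T5 (u : (Fin n → ℝ) → (Fin n → ℝ)) (a b c d e m : Fin n) :
    (Fin n → ℝ) → ℝ :=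
  pds a (pds b (pds c (pds d (pds e (fun y => u y m)))))

lemma Ed_pds4 {u : (Fin n → ℝ) → (Fin n → ℝ)} (hu : ContDiff ℝ (⊤ : ℕ∞) u)
    (p q r s a b : Fin n) (x : Fin n → ℝ) :
    pds p (pds q (pds r (pds s (fun y => Ed u y a b)))) x
      = (T5 u p q r s b a x + T5 u p q r s a b x) / 2
        - ((if a = b then (1:ℝ) else 0) / n) * ∑ m, T5 u p q r s m m x := by
  have hF : ContDiff ℝ (⊤ : ℕ∞) (pds b (fun z => u z a)) :=
    contDiff_pds (contDiff_comp' hu a) b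
  have hG : ContDiff ℝ (⊤ : ℕ∞) (pds a (fun z => u z b)) :=
    contDiff_pds (contDiff_comp' hu b) a
  have hHm : ∀ m : Fin n, ContDiff ℝ (⊤ : ℕ∞) (pds m (fun z => u z m)) := fun m =>
    contDiff_pds (contDiff_comp' hu m) m
  have hH : ContDiff ℝ (⊤ : ℕ∞) (fun y => ∑ m, pds m (fun z => u z m) y) :=
    ContDiff.sum fun m _ => hHm m
  rw [Ed_eq hu a b, pds_comb3 hF hG hH _ _ _ s,
    pds_comb3 (contDiff_pds hF s) (contDiff_pds hG s) (contDiff_pds hH s) _ _ _ r,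
    pds_comb3 (contDiff_pds (contDiff_pds hF s) r) (contDiff_pds (contDiff_pds hG s) r)
      (contDiff_pds (contDiff_pds hH s) r) _ _ _ q,
    pds_comb3 (contDiff_pds (contDiff_pds (contDiff_pds hF s) r) q)
      (contDiff_pds (contDiff_pds (contDiff_pds hG s) r) q)
      (contDiff_pds (contDiff_pds (contDiff_pds hH s) r) q) _ _ _ p]
  have hsum : pds p (pds q (pds r (pds s (fun y => ∑ m, pds m (fun z => u z m) y)))) x
      = ∑ m, T5 u p q r s m m x := by
    rw [pds_sum Finset.univ hHm s,
      pds_sum Finset.univ (fun m => contDiff_pds (hHm m) s) r,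
      pds_sum Finset.univ (fun m => contDiff_pds (contDiff_pds (hHm m) s) r) q]
    show pds p (fun y => ∑ m, pds q (pds r (pds s (pds m (fun z => u z m)))) y) x = _
    rw [pds_sum Finset.univ
      (fun m => contDiff_pds (contDiff_pds (contDiff_pds (hHm m) s) r) q) p]
    rfl
  have hT1 : pds p (pds q (pds r (pds s (pds b (fun z => u z a))))) x
      = T5 u p q r s b a x := rfl
  have hT2 : pds p (pds q (pds r (pds s (pds a (fun z => u z b))))) x
      = T5 u p q r s a b x := rfl
  beta_reduce
  rw [hsum, hT1, hT2]
  ring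

section swaps
variable {u : (Fin n → ℝ) → (Fin n → ℝ)}

lemma T5_swap12 (hu : ContDiff ℝ (⊤ : ℕ∞) u) (a b c d e m : Fin n) : T5 u a b c d e m = T5 u b a c d e m :=
  funext (pds_comm (contDiff_pds (contDiff_pds (contDiff_pds (contDiff_comp' hu m) e) d) c) a b)

lemma T5_swap23 (hu : ContDiff ℝ (⊤ : ℕ∞) u) (a b c d e m : Fin n) : T5 u a b c d e m = T5 u a c b d e m := by
  unfold T5
  rw [funext (pds_comm (contDiff_pds (contDiff_pds (contDiff_comp' hu m) e) d) b c)]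

lemma T5_swap34 (hu : ContDiff ℝ (⊤ : ℕ∞) u) (a b c d e m : Fin n) : T5 u a b c d e m = T5 u a b d c e m := by
  unfold T5
  rw [funext (pds_comm (contDiff_pds (contDiff_comp' hu m) e) c d)]

lemma T5_swap45 (hu : ContDiff ℝ (⊤ : ℕ∞) u) (a b c d e m : Fin n) : T5 u a b c d e m = T5 u a b c e d m := by
  unfold T5
  rw [funext (pds_comm (contDiff_comp' hu m) d e)]

end swaps


/-- the explicit fourth-order operator `𝒜` annihilates the deviatoric
symmetric gradient: for every `u ∈ C^∞(ℝⁿ;ℝⁿ)`, `𝒜(ℰ_d u) = 0`, where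
`(𝒜 F)_{jk} = Σ_{i,ℓ}(∂_{iijℓ}F_{kℓ} + ∂_{iikℓ}F_{ℓj}) − Σ_{i,ℓ}∂_{iiℓℓ}F_{jk}
 − ((n−2)/(n−1))Σ_{i,ℓ}∂_{iℓjk}F_{iℓ} − (δ_{jk}/(n−1))Σ_{i,ℓ,m}∂_{iiℓm}F_{ℓm}`. -/
theorem annihilator_of_deviatoric_gradient {n : ℕ} (hn : 3 ≤ n)
    (u : (Fin n → ℝ) → (Fin n → ℝ)) (hu : ContDiff ℝ (⊤ : ℕ∞) u)
    (x : Fin n → ℝ) (j k : Fin n) :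
    (∑ i, ∑ l, (pds i (pds i (pds j (pds l (fun y => Ed u y k l)))) x
        + pds i (pds i (pds k (pds l (fun y => Ed u y l j)))) x))
      - (∑ i, ∑ l, pds i (pds i (pds l (pds l (fun y => Ed u y j k)))) x)
      - (((n : ℝ) - 2) / ((n : ℝ) - 1)) *
          (∑ i, ∑ l, pds i (pds l (pds j (pds k (fun y => Ed u y i l)))) x)
      - ((if j = k then (1 : ℝ) else 0) / ((n : ℝ) - 1)) *
          (∑ i, ∑ l, ∑ m, pds i (pds i (pds l (pds m (fun y => Ed u y l m)))) x) = 0 := by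
  have hn0 : (n : ℝ) ≠ 0 := by
    have : (0:ℝ) < n := by exact_mod_cast Nat.lt_of_lt_of_le (by norm_num) hn
    linarith
  have hn1 : (n : ℝ) - 1 ≠ 0 := by
    have : (3:ℝ) ≤ n := by exact_mod_cast hn
    intro h; linarith
  have collapse : ∀ (f : Fin n → ℝ) (a : Fin n),
      ∑ b, (if a = b then (1:ℝ) else 0) / (n:ℝ) * f b = f a / n := by
    intro f a
    have h : ∀ b, (if a = b then (1:ℝ) else 0) / (n:ℝ) * f b
        = if a = b then f b / n else 0 := by
      intro b; split <;> simp [div_eq_mul_inv, mul_comm]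
    simp only [h, Finset.sum_ite_eq, Finset.mem_univ, if_true]
  have collapse' : ∀ (f : Fin n → ℝ) (a : Fin n),
      ∑ b, (if b = a then (1:ℝ) else 0) / (n:ℝ) * f b = f a / n := by
    intro f a
    have h : ∀ b, (if b = a then (1:ℝ) else 0) / (n:ℝ) * f b
        = if b = a then f b / n else 0 := by
      intro b; split <;> simp [div_eq_mul_inv, mul_comm]
    simp only [h, Finset.sum_ite_eq', Finset.mem_univ, if_true]
  -- pointwise permutation identities
  have e1 : ∀ i l : Fin n, T5 u i i j l l k = T5 u i i l l j k := by
    intro i l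
    calc T5 u i i j l l k = T5 u i i l j l k := T5_swap34 hu i i j l l k
      _ = T5 u i i l l j k := T5_swap45 hu i i l j l k
  have e2 : ∀ i l : Fin n, T5 u i i j l k l = T5 u i i j k l l := fun i l =>
    T5_swap45 hu i i j l k l
  have e3 : ∀ i l : Fin n, T5 u i i k l j l = T5 u i i j k l l := by
    intro i l
    calc T5 u i i k l j l = T5 u i i k j l l := T5_swap45 hu i i k l j l
      _ = T5 u i i j k l l := T5_swap34 hu i i k j l l
  have e4 : ∀ i l : Fin n, T5 u i i k l l j = T5 u i i l l k j := by
    intro i l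
    calc T5 u i i k l l j = T5 u i i l k l j := T5_swap34 hu i i k l l j
      _ = T5 u i i l l k j := T5_swap45 hu i i l k l j
  have e5 : ∀ i m : Fin n, T5 u i i k j m m = T5 u i i j k m m := fun i m =>
    T5_swap34 hu i i k j m m
  have e6 : ∀ i l : Fin n, T5 u i l j k l i = T5 u l l j k i i := by
    intro i l
    calc T5 u i l j k l i = T5 u l i j k l i := T5_swap12 hu i l j k l i
      _ = T5 u l j i k l i := T5_swap23 hu l i j k l i
      _ = T5 u l j k i l i := T5_swap34 hu l j i k l i
      _ = T5 u l j k l i i := T5_swap45 hu l j k i l i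
      _ = T5 u l j l k i i := T5_swap34 hu l j k l i i
      _ = T5 u l l j k i i := T5_swap23 hu l j l k i i
  have e7 : ∀ i l : Fin n, T5 u i l j k i l = T5 u i i j k l l := by
    intro i l
    calc T5 u i l j k i l = T5 u i l j i k l := T5_swap45 hu i l j k i l
      _ = T5 u i l i j k l := T5_swap34 hu i l j i k l
      _ = T5 u i i l j k l := T5_swap23 hu i l i j k l
      _ = T5 u i i j l k l := T5_swap34 hu i i l j k l
      _ = T5 u i i j k l l := T5_swap45 hu i i j l k l
  have e8 : ∀ i l m : Fin n, T5 u i i l m m l = T5 u i i m m l l := by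
    intro i l m
    calc T5 u i i l m m l = T5 u i i m l m l := T5_swap34 hu i i l m m l
      _ = T5 u i i m m l l := T5_swap45 hu i i m l m l
  have e9 : ∀ i l m : Fin n, T5 u i i l m l m = T5 u i i l l m m := fun i l m =>
    T5_swap45 hu i i l m l m
  -- sum-level identities
  have h1 : ∑ i, ∑ l, T5 u i i j l l k x = ∑ i, ∑ l, T5 u i i l l j k x :=
    Finset.sum_congr rfl fun i _ => Finset.sum_congr rfl fun l _ => by rw [e1 i l]
  have h2 : ∑ i, ∑ l, T5 u i i j l k l x = ∑ i, ∑ l, T5 u i i j k l l x :=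
    Finset.sum_congr rfl fun i _ => Finset.sum_congr rfl fun l _ => by rw [e2 i l]
  have h3 : ∑ i, ∑ l, (if k = l then (1:ℝ) else 0) / (n:ℝ) * ∑ m, T5 u i i j l m m x
      = (∑ i, ∑ l, T5 u i i j k l l x) / n := by
    calc ∑ i, ∑ l, (if k = l then (1:ℝ) else 0) / (n:ℝ) * ∑ m, T5 u i i j l m m x
        = ∑ i, (∑ m, T5 u i i j k m m x) / (n:ℝ) :=
          Finset.sum_congr rfl fun i _ => collapse (fun l => ∑ m, T5 u i i j l m m x) k
      _ = (∑ i, ∑ l, T5 u i i j k l l x) / n := by rw [Finset.sum_div]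
  have h4 : ∑ i, ∑ l, T5 u i i k l j l x = ∑ i, ∑ l, T5 u i i j k l l x :=
    Finset.sum_congr rfl fun i _ => Finset.sum_congr rfl fun l _ => by rw [e3 i l]
  have h5 : ∑ i, ∑ l, T5 u i i k l l j x = ∑ i, ∑ l, T5 u i i l l k j x :=
    Finset.sum_congr rfl fun i _ => Finset.sum_congr rfl fun l _ => by rw [e4 i l]
  have h6 : ∑ i, ∑ l, (if l = j then (1:ℝ) else 0) / (n:ℝ) * ∑ m, T5 u i i k l m m x
      = (∑ i, ∑ l, T5 u i i j k l l x) / n := by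
    calc ∑ i, ∑ l, (if l = j then (1:ℝ) else 0) / (n:ℝ) * ∑ m, T5 u i i k l m m x
        = ∑ i, (∑ m, T5 u i i k j m m x) / (n:ℝ) :=
          Finset.sum_congr rfl fun i _ => collapse' (fun l => ∑ m, T5 u i i k l m m x) j
      _ = ∑ i, (∑ m, T5 u i i j k m m x) / (n:ℝ) := by
          refine Finset.sum_congr rfl fun i _ => ?_
          rw [Finset.sum_congr rfl fun m _ => by rw [e5 i m]]
      _ = (∑ i, ∑ l, T5 u i i j k l l x) / n := by rw [Finset.sum_div]
  have h9 : ∑ i, ∑ l, (if j = k then (1:ℝ) else 0) / (n:ℝ) * ∑ m, T5 u i i l l m m x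
      = (if j = k then (1:ℝ) else 0) / (n:ℝ) * ∑ i, ∑ l, ∑ m, T5 u i i l l m m x := by
    simp only [← Finset.mul_sum]
  have h10 : ∑ i, ∑ l, T5 u i l j k l i x = ∑ i, ∑ l, T5 u i i j k l l x := by
    calc ∑ i, ∑ l, T5 u i l j k l i x = ∑ i, ∑ l, T5 u l l j k i i x :=
          Finset.sum_congr rfl fun i _ => Finset.sum_congr rfl fun l _ => by rw [e6 i l]
      _ = ∑ i, ∑ l, T5 u i i j k l l x := Finset.sum_comm
  have h11 : ∑ i, ∑ l, T5 u i l j k i l x = ∑ i, ∑ l, T5 u i i j k l l x :=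
    Finset.sum_congr rfl fun i _ => Finset.sum_congr rfl fun l _ => by rw [e7 i l]
  have h12 : ∑ i, ∑ l, (if i = l then (1:ℝ) else 0) / (n:ℝ) * ∑ m, T5 u i l j k m m x
      = (∑ i, ∑ l, T5 u i i j k l l x) / n := by
    calc ∑ i, ∑ l, (if i = l then (1:ℝ) else 0) / (n:ℝ) * ∑ m, T5 u i l j k m m x
        = ∑ i, (∑ m, T5 u i i j k m m x) / (n:ℝ) :=
          Finset.sum_congr rfl fun i _ => collapse (fun l => ∑ m, T5 u i l j k m m x) i
      _ = (∑ i, ∑ l, T5 u i i j k l l x) / n := by rw [Finset.sum_div]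
  have h13 : ∑ i, ∑ l, ∑ m, T5 u i i l m m l x = ∑ i, ∑ l, ∑ m, T5 u i i l l m m x := by
    calc ∑ i, ∑ l, ∑ m, T5 u i i l m m l x = ∑ i, ∑ l, ∑ m, T5 u i i m m l l x :=
          Finset.sum_congr rfl fun i _ => Finset.sum_congr rfl fun l _ =>
            Finset.sum_congr rfl fun m _ => by rw [e8 i l m]
      _ = ∑ i, ∑ l, ∑ m, T5 u i i l l m m x :=
          Finset.sum_congr rfl fun i _ => Finset.sum_comm
  have h14 : ∑ i, ∑ l, ∑ m, T5 u i i l m l m x = ∑ i, ∑ l, ∑ m, T5 u i i l l m m x :=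
    Finset.sum_congr rfl fun i _ => Finset.sum_congr rfl fun l _ =>
      Finset.sum_congr rfl fun m _ => by rw [e9 i l m]
  have h15 : ∑ i, ∑ l, ∑ m, (if l = m then (1:ℝ) else 0) / (n:ℝ) * ∑ p, T5 u i i l m p p x
      = (∑ i, ∑ l, ∑ m, T5 u i i l l m m x) / n := by
    calc ∑ i, ∑ l, ∑ m, (if l = m then (1:ℝ) else 0) / (n:ℝ) * ∑ p, T5 u i i l m p p x
        = ∑ i, ∑ l, (∑ p, T5 u i i l l p p x) / (n:ℝ) :=
          Finset.sum_congr rfl fun i _ => Finset.sum_congr rfl fun l _ =>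
            collapse (fun m => ∑ p, T5 u i i l m p p x) l
      _ = (∑ i, ∑ l, ∑ m, T5 u i i l l m m x) / n := by
          rw [Finset.sum_div]
          exact Finset.sum_congr rfl fun i _ => by rw [Finset.sum_div]
  simp only [Ed_pds4 hu]
  simp only [add_div, Finset.sum_add_distrib, Finset.sum_sub_distrib, ← Finset.sum_div]
  rw [h1, h2, h3, h4, h5, h6, h9, h10, h11, h12, h13, h14, h15]
  set D := (if j = k then (1:ℝ) else 0) with hD
  field_simp
  ring
end

section
/- Let n ≥ 4, α ∈ ℝ, β ≠ 0, η, ϑ ∈ ℝ. If there exists P ∈ C²(ℝⁿ;ℝⁿ) solving ℰ_d P = (e₁⊗_{ℰ_d}(αe₁ + βe₂))·[η·x₁(αx₁ + βx₂) − ϑ·Σ_{j=3}^n x_j²], then necessarily η = 2αϑ/β². -/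
/-- Euclidean dot product on `Fin n → ℝ`. -/
def dotp {n : ℕ} (a b : Fin n → ℝ) : ℝ := ∑ i, a i * b i

/-- `a ⊗_{ℰ_d} b := a⊙b − ((a·b)/n)·Id`. -/
noncomputable def edT (n : ℕ) (a b : Fin n → ℝ) (i j : Fin n) : ℝ :=
  (a i * b j + a j * b i) / 2 - (dotp a b / (n : ℝ)) * (if i = j then 1 else 0)

open MeasureTheory intervalIntegral

variable {n : ℕ}

/-- Schwarz: second derivatives of a C² scalar function commute. -/
lemma schwarz_pt (φ : (Fin n → ℝ) → ℝ) (hφ : ContDiff ℝ 2 φ) (x v w : Fin n → ℝ) :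
    fderiv ℝ (fun y => fderiv ℝ φ y v) x w = fderiv ℝ (fun y => fderiv ℝ φ y w) x v := by
  have hdiff : Differentiable ℝ φ := hφ.differentiable (by norm_num)
  have hf1 : ContDiff ℝ 1 (fderiv ℝ φ) := hφ.fderiv_right (by norm_num)
  have hdx : DifferentiableAt ℝ (fderiv ℝ φ) x := (hf1.differentiable one_ne_zero) x
  have key : ∀ u w : Fin n → ℝ,
      fderiv ℝ (fun y => fderiv ℝ φ y u) x w = fderiv ℝ (fderiv ℝ φ) x w u := by
    intro u w
    have h := ((ContinuousLinearMap.apply ℝ ℝ u).hasFDerivAt.comp x hdx.hasFDerivAt).fderiv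
    calc fderiv ℝ (fun y => fderiv ℝ φ y u) x w
        = fderiv ℝ (⇑(ContinuousLinearMap.apply ℝ ℝ u) ∘ fderiv ℝ φ) x w := rfl
      _ = ((ContinuousLinearMap.apply ℝ ℝ u).comp (fderiv ℝ (fderiv ℝ φ) x)) w := by rw [h]
      _ = fderiv ℝ (fderiv ℝ φ) x w u := rfl
  rw [key v w, key w v]
  exact second_derivative_symmetric (fun y => (hdiff y).hasFDerivAt) hdx.hasFDerivAt w v

lemma line_cont {g : (Fin n → ℝ) → ℝ} (hg : Continuous g) (x v : Fin n → ℝ) :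
    Continuous fun s : ℝ => g (x + s • v) := by fun_prop

/-- FTC along a segment. -/
lemma ftc_line (F : (Fin n → ℝ) → ℝ) (hF : ContDiff ℝ 1 F) (x v : Fin n → ℝ) :
    ∫ s in (0:ℝ)..1, fderiv ℝ F (x + s • v) v = F (x + v) - F x := by
  have hder : ∀ s ∈ Set.uIcc (0:ℝ) 1,
      HasDerivAt (fun t : ℝ => F (x + t • v)) (fderiv ℝ F (x + s • v) v) s := by
    intro s _
    have hline : HasDerivAt (fun t : ℝ => x + t • v) v s := by
      simpa using ((hasDerivAt_id s).smul_const v).const_add x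
    exact (((hF.differentiable one_ne_zero) (x + s • v)).hasFDerivAt).comp_hasDerivAt s hline
  have hcont : Continuous fun s : ℝ => fderiv ℝ F (x + s • v) v := by
    have h1 : Continuous (fderiv ℝ F) := hF.continuous_fderiv one_ne_zero
    fun_prop
  have := intervalIntegral.integral_eq_sub_of_hasDerivAt hder
    (hcont.intervalIntegrable 0 1)
  simpa using this

/-- Discrete Saint-Venant/Schwarz identity on a unit cell. -/
lemma diff_swap (F Ga Gb : (Fin n → ℝ) → ℝ) (hF : ContDiff ℝ 1 F) (va vb : Fin n → ℝ)
    (ha : ∀ y, fderiv ℝ F y va = Ga y) (hb : ∀ y, fderiv ℝ F y vb = Gb y) (x : Fin n → ℝ) :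
    ∫ s in (0:ℝ)..1, (Ga (x + vb + s • va) - Ga (x + s • va))
      = ∫ s in (0:ℝ)..1, (Gb (x + va + s • vb) - Gb (x + s • vb)) := by
  have hcf : Continuous (fderiv ℝ F) := hF.continuous_fderiv one_ne_zero
  have hGa : Continuous Ga := by
    have : Ga = fun y => fderiv ℝ F y va := by funext y; rw [ha y]
    rw [this]; fun_prop
  have hGb : Continuous Gb := by
    have : Gb = fun y => fderiv ℝ F y vb := by funext y; rw [hb y]
    rw [this]; fun_prop
  have ia : ∀ z : Fin n → ℝ, ∫ s in (0:ℝ)..1, Ga (z + s • va) = F (z + va) - F z := by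
    intro z
    rw [← ftc_line F hF z va]
    apply intervalIntegral.integral_congr
    intro s _; exact (ha _).symm
  have ib : ∀ z : Fin n → ℝ, ∫ s in (0:ℝ)..1, Gb (z + s • vb) = F (z + vb) - F z := by
    intro z
    rw [← ftc_line F hF z vb]
    apply intervalIntegral.integral_congr
    intro s _; exact (hb _).symm
  have sa : ∫ s in (0:ℝ)..1, (Ga (x + vb + s • va) - Ga (x + s • va))
      = (∫ s in (0:ℝ)..1, Ga (x + vb + s • va)) - ∫ s in (0:ℝ)..1, Ga (x + s • va) := by
    apply intervalIntegral.integral_sub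
    · exact ((line_cont hGa (x + vb) va)).intervalIntegrable 0 1
    · exact ((line_cont hGa x va)).intervalIntegrable 0 1
  have sb : ∫ s in (0:ℝ)..1, (Gb (x + va + s • vb) - Gb (x + s • vb))
      = (∫ s in (0:ℝ)..1, Gb (x + va + s • vb)) - ∫ s in (0:ℝ)..1, Gb (x + s • vb) := by
    apply intervalIntegral.integral_sub
    · exact ((line_cont hGb (x + va) vb)).intervalIntegrable 0 1
    · exact ((line_cont hGb x vb)).intervalIntegrable 0 1
  rw [sa, sb, ia, ia, ib, ib]
  have : x + vb + va = x + va + vb := by abel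
  rw [this]
  ring

/-- Smearing operator: average along a unit segment in direction `v`. -/
noncomputable def Sm (v : Fin n → ℝ) (g : (Fin n → ℝ) → ℝ) : (Fin n → ℝ) → ℝ :=
  fun x => ∫ s in (0:ℝ)..1, g (x + s • v)

lemma Sm_cont {g : (Fin n → ℝ) → ℝ} (hg : Continuous g) (v : Fin n → ℝ) :
    Continuous (Sm v g) := by
  have : Continuous (Function.uncurry fun (x : Fin n → ℝ) (t : ℝ) => g (x + t • v)) := by
    apply hg.comp; fun_prop
  exact intervalIntegral.continuous_parametric_intervalIntegral_of_continuous' this 0 1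

lemma Sm_swap {g : (Fin n → ℝ) → ℝ} (hg : Continuous g) (v w x) :
    Sm v (Sm w g) x = Sm w (Sm v g) x := by
  have key : ∀ (a b : Fin n → ℝ),
      ∫ s in (0:ℝ)..1, ∫ t in (0:ℝ)..1, g (x + s • a + t • b)
        = ∫ t in (0:ℝ)..1, ∫ s in (0:ℝ)..1, g (x + s • a + t • b) := by
    intro a b
    have hc : Continuous (Function.uncurry fun (s t : ℝ) => g (x + s • a + t • b)) := by
      apply hg.comp; fun_prop
    have hint : Integrable (Function.uncurry fun (s t : ℝ) => g (x + s • a + t • b))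
        ((volume.restrict (Set.Ioc (0:ℝ) 1)).prod (volume.restrict (Set.Ioc (0:ℝ) 1))) := by
      rw [Measure.prod_restrict]
      have h1 : IntegrableOn (Function.uncurry fun (s t : ℝ) => g (x + s • a + t • b))
          (Set.Icc (0:ℝ) 1 ×ˢ Set.Icc (0:ℝ) 1) (volume.prod volume) :=
        hc.continuousOn.integrableOn_compact (IsCompact.prod isCompact_Icc isCompact_Icc)
      exact h1.mono_set (Set.prod_mono Set.Ioc_subset_Icc_self Set.Ioc_subset_Icc_self)
    have := MeasureTheory.integral_integral_swap hint
    simpa [intervalIntegral.integral_of_le (zero_le_one (α := ℝ))] using this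
  show (∫ s in (0:ℝ)..1, Sm w g (x + s • v)) = ∫ t in (0:ℝ)..1, Sm v g (x + t • w)
  calc (∫ s in (0:ℝ)..1, Sm w g (x + s • v))
      = ∫ s in (0:ℝ)..1, ∫ t in (0:ℝ)..1, g (x + s • v + t • w) := rfl
    _ = ∫ t in (0:ℝ)..1, ∫ s in (0:ℝ)..1, g (x + s • v + t • w) := key v w
    _ = ∫ t in (0:ℝ)..1, Sm v g (x + t • w) := by
        apply intervalIntegral.integral_congr
        intro t _
        show _ = ∫ s in (0:ℝ)..1, g (x + t • w + s • v)
        apply intervalIntegral.integral_congr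
        intro s _
        show g (x + s • v + t • w) = g (x + t • w + s • v)
        congr 1; abel

lemma Sm_add {g h : (Fin n → ℝ) → ℝ} (hg : Continuous g) (hh : Continuous h) (v x) :
    Sm v (fun y => g y + h y) x = Sm v g x + Sm v h x := by
  apply intervalIntegral.integral_add
  · exact ((hg.comp (by fun_prop : Continuous fun s : ℝ => x + s • v))).intervalIntegrable 0 1
  · exact ((hh.comp (by fun_prop : Continuous fun s : ℝ => x + s • v))).intervalIntegrable 0 1

lemma Sm_const (v : Fin n → ℝ) (c : ℝ) (x) : Sm v (fun _ => c) x = c := by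
  simp [Sm]

lemma Sm_neg (v : Fin n → ℝ) (G : (Fin n → ℝ) → ℝ) (x : Fin n → ℝ) :
    Sm v (fun y => -G y) x = -(Sm v G x) :=
  intervalIntegral.integral_neg

lemma Sm_add_const {G : (Fin n → ℝ) → ℝ} (hG : Continuous G) (v : Fin n → ℝ) (c : ℝ)
    (x : Fin n → ℝ) : Sm v (fun y => G y + c) x = Sm v G x + c := by
  unfold Sm
  rw [intervalIntegral.integral_add ((line_cont hG x v).intervalIntegrable 0 1)
    (intervalIntegrable_const)]
  simp

lemma Sm_const_sub {G : (Fin n → ℝ) → ℝ} (hG : Continuous G) (v : Fin n → ℝ) (c : ℝ)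
    (x : Fin n → ℝ) : Sm v (fun y => c - G y) x = c - Sm v G x := by
  unfold Sm
  rw [intervalIntegral.integral_sub (intervalIntegrable_const)
    ((line_cont hG x v).intervalIntegrable 0 1)]
  simp
lemma diff_swap' (F Ga Gb : (Fin n → ℝ) → ℝ) (hF : ContDiff ℝ 1 F) (va vb : Fin n → ℝ)
    (ha : ∀ y, fderiv ℝ F y va = Ga y) (hb : ∀ y, fderiv ℝ F y vb = Gb y) (x : Fin n → ℝ) :
    Sm va (fun y => Ga (y + vb) - Ga y) x = Sm vb (fun y => Gb (y + va) - Gb y) x := by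
  have h := diff_swap F Ga Gb hF va vb ha hb x
  unfold Sm
  calc (∫ s in (0:ℝ)..1, (Ga ((x + s • va) + vb) - Ga (x + s • va)))
      = ∫ s in (0:ℝ)..1, (Ga ((x + vb) + s • va) - Ga (x + s • va)) := by
        apply intervalIntegral.integral_congr; intro s _
        show Ga ((x + s • va) + vb) - Ga (x + s • va) = Ga ((x + vb) + s • va) - Ga (x + s • va)
        congr 2; abel
    _ = ∫ s in (0:ℝ)..1, (Gb ((x + va) + s • vb) - Gb (x + s • vb)) := h
    _ = ∫ s in (0:ℝ)..1, (Gb ((x + s • vb) + va) - Gb (x + s • vb)) := by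
        apply intervalIntegral.integral_congr; intro s _
        show Gb ((x + va) + s • vb) - Gb (x + s • vb) = Gb ((x + s • vb) + va) - Gb (x + s • vb)
        congr 2; abel

/-- Core argument: from the first-order consequences of `ℰ_d P = M f`, derive `ηβ² = 2αϑ`. -/
lemma core {n : ℕ} (i₀ i₁ i₂ i₃ : Fin n) (α β η ϑ : ℝ)
    (h01 : i₀ ≠ i₁) (h02 : i₀ ≠ i₂)
    (u₀ u₁ u₂ u₃ f : (Fin n → ℝ) → ℝ)
    (hu₀ : ContDiff ℝ 2 u₀) (hu₁ : ContDiff ℝ 2 u₁) (hu₂ : ContDiff ℝ 2 u₂)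
    (hu₃ : ContDiff ℝ 2 u₃)
    (hf : Differentiable ℝ f)
    (df1 : ∀ y, fderiv ℝ f y (Pi.single i₁ 1) = η * β * y i₀)
    (df2 : ∀ y, fderiv ℝ f y (Pi.single i₂ 1) = -(2 * ϑ) * y i₂)
    (H1 : ∀ x, fderiv ℝ u₀ x (Pi.single i₁ 1) + fderiv ℝ u₁ x (Pi.single i₀ 1) = β * f x)
    (H2 : ∀ x, fderiv ℝ u₀ x (Pi.single i₂ 1) + fderiv ℝ u₂ x (Pi.single i₀ 1) = 0)
    (H3 : ∀ x, fderiv ℝ u₁ x (Pi.single i₂ 1) + fderiv ℝ u₂ x (Pi.single i₁ 1) = 0)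
    (H4 : ∀ x, fderiv ℝ u₁ x (Pi.single i₃ 1) + fderiv ℝ u₃ x (Pi.single i₁ 1) = 0)
    (H5 : ∀ x, fderiv ℝ u₂ x (Pi.single i₃ 1) + fderiv ℝ u₃ x (Pi.single i₂ 1) = 0)
    (H6 : ∀ x, fderiv ℝ u₀ x (Pi.single i₀ 1) = fderiv ℝ u₁ x (Pi.single i₁ 1) + α * f x)
    (H7 : ∀ x, fderiv ℝ u₂ x (Pi.single i₂ 1) = fderiv ℝ u₁ x (Pi.single i₁ 1))
    (H8 : ∀ x, fderiv ℝ u₃ x (Pi.single i₃ 1) = fderiv ℝ u₁ x (Pi.single i₁ 1)) :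
    η * β ^ 2 = 2 * α * ϑ := by
  classical
  set e : Fin n → (Fin n → ℝ) := fun k => Pi.single k 1 with he
  set B : (Fin n → ℝ) → ℝ := fun x => fderiv ℝ u₁ x (e i₁) with hB
  set b : Fin n → (Fin n → ℝ) → ℝ := fun k x => fderiv ℝ B x (e k) with hb
  have two_le : (1 : WithTop ℕ∞) + 1 ≤ 2 := by norm_num
  have c1 : ∀ (u : (Fin n → ℝ) → ℝ), ContDiff ℝ 2 u → ∀ vv : Fin n → ℝ,
      ContDiff ℝ 1 (fun x => fderiv ℝ u x vv) := fun u hu vv =>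
    (hu.fderiv_right two_le).clm_apply contDiff_const
  have hdiffg : ∀ (u : (Fin n → ℝ) → ℝ), ContDiff ℝ 2 u → ∀ vv : Fin n → ℝ,
      Differentiable ℝ (fun x => fderiv ℝ u x vv) := fun u hu vv =>
    (c1 u hu vv).differentiable one_ne_zero
  have hB1 : ContDiff ℝ 1 B := c1 u₁ hu₁ (e i₁)
  have hBd : Differentiable ℝ B := hB1.differentiable one_ne_zero
  have hbc : ∀ k, Continuous (b k) := by
    intro k
    have h1 : Continuous (fderiv ℝ B) := hB1.continuous_fderiv one_ne_zero
    rw [hb]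
    fun_prop
  -- function identities from the H-equalities
  have hG00 : (fun x => fderiv ℝ u₀ x (e i₀)) = fun x => B x + α * f x := by
    funext x; exact H6 x
  have hG22 : (fun x => fderiv ℝ u₂ x (e i₂)) = B := by funext x; exact H7 x
  have hG33 : (fun x => fderiv ℝ u₃ x (e i₃)) = B := by funext x; exact H8 x
  have hpf : (fun x => fderiv ℝ u₀ x (e i₁)) = fun x => β * f x - fderiv ℝ u₁ x (e i₀) := by
    funext x; have := H1 x; linarith
  have hrf : (fun x => fderiv ℝ u₀ x (e i₂)) = fun x => -fderiv ℝ u₂ x (e i₀) := by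
    funext x; have := H2 x; linarith
  have htf : (fun x => fderiv ℝ u₁ x (e i₂)) = fun x => -fderiv ℝ u₂ x (e i₁) := by
    funext x; have := H3 x; linarith
  have hvf : (fun x => fderiv ℝ u₁ x (e i₃)) = fun x => -fderiv ℝ u₃ x (e i₁) := by
    funext x; have := H4 x; linarith
  have hwf : (fun x => fderiv ℝ u₂ x (e i₃)) = fun x => -fderiv ℝ u₃ x (e i₂) := by
    funext x; have := H5 x; linarith
  -- derivative helpers
  have hBaf : ∀ (y vv : Fin n → ℝ),
      fderiv ℝ (fun x => B x + α * f x) y vv = fderiv ℝ B y vv + α * fderiv ℝ f y vv := by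
    intro y vv
    rw [fderiv_fun_add (hBd y) ((hf y).const_mul α), fderiv_const_mul (hf y)]
    simp
  have hsub : ∀ (c : ℝ) (g h : (Fin n → ℝ) → ℝ), Differentiable ℝ g → Differentiable ℝ h →
      ∀ (y vv : Fin n → ℝ),
      fderiv ℝ (fun x => c * g x - h x) y vv = c * fderiv ℝ g y vv - fderiv ℝ h y vv := by
    intro c g h hg hh y vv
    rw [fderiv_fun_sub ((hg y).const_mul c) (hh y), fderiv_const_mul (hg y)]
    simp
  have hnegd : ∀ (g : (Fin n → ℝ) → ℝ) (y vv : Fin n → ℝ),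
      fderiv ℝ (fun x => -g x) y vv = -fderiv ℝ g y vv := by
    intro g y vv; rw [fderiv_fun_neg]; simp
  have foldB : (fun z => fderiv ℝ u₁ z (e i₁)) = B := rfl
  -- the ten gradient identities
  have pa : ∀ y, fderiv ℝ (fun x => fderiv ℝ u₀ x (e i₁)) y (e i₀)
      = b i₁ y + α * (η * β * y i₀) := by
    intro y
    rw [schwarz_pt u₀ hu₀ y (e i₁) (e i₀), hG00, hBaf, df1]
  have pb : ∀ y, fderiv ℝ (fun x => fderiv ℝ u₀ x (e i₁)) y (e i₁)
      = η * β ^ 2 * y i₀ - b i₀ y := by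
    intro y
    rw [hpf, hsub β f _ hf (hdiffg u₁ hu₁ (e i₀)), df1,
      schwarz_pt u₁ hu₁ y (e i₀) (e i₁), foldB]; ring
  have ra : ∀ y, fderiv ℝ (fun x => fderiv ℝ u₀ x (e i₂)) y (e i₀)
      = b i₂ y + α * (-(2 * ϑ) * y i₂) := by
    intro y
    rw [schwarz_pt u₀ hu₀ y (e i₂) (e i₀), hG00, hBaf, df2]
  have rb : ∀ y, fderiv ℝ (fun x => fderiv ℝ u₀ x (e i₂)) y (e i₂) = -b i₀ y := by
    intro y
    rw [hrf, hnegd, schwarz_pt u₂ hu₂ y (e i₀) (e i₂), hG22]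
  have ta : ∀ y, fderiv ℝ (fun x => fderiv ℝ u₁ x (e i₂)) y (e i₁) = b i₂ y := by
    intro y
    rw [schwarz_pt u₁ hu₁ y (e i₂) (e i₁), foldB]
  have tb : ∀ y, fderiv ℝ (fun x => fderiv ℝ u₁ x (e i₂)) y (e i₂) = -b i₁ y := by
    intro y
    rw [htf, hnegd, schwarz_pt u₂ hu₂ y (e i₁) (e i₂), hG22]
  have va : ∀ y, fderiv ℝ (fun x => fderiv ℝ u₁ x (e i₃)) y (e i₁) = b i₃ y := by
    intro y
    rw [schwarz_pt u₁ hu₁ y (e i₃) (e i₁), foldB]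
  have vb : ∀ y, fderiv ℝ (fun x => fderiv ℝ u₁ x (e i₃)) y (e i₃) = -b i₁ y := by
    intro y
    rw [hvf, hnegd, schwarz_pt u₃ hu₃ y (e i₁) (e i₃), hG33]
  have wa : ∀ y, fderiv ℝ (fun x => fderiv ℝ u₂ x (e i₃)) y (e i₂) = b i₃ y := by
    intro y
    rw [schwarz_pt u₂ hu₂ y (e i₃) (e i₂), hG22]
  have wb : ∀ y, fderiv ℝ (fun x => fderiv ℝ u₂ x (e i₃)) y (e i₃) = -b i₂ y := by
    intro y
    rw [hwf, hnegd, schwarz_pt u₃ hu₃ y (e i₂) (e i₃), hG33]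
  -- coordinate facts
  have cne : ∀ (k j : Fin n), j ≠ k → ∀ y : Fin n → ℝ, (y + e k) j = y j := by
    intro k j hjk y
    simp [he, Pi.single_eq_of_ne hjk]
  have ceq : ∀ (k : Fin n) (y : Fin n → ℝ), (y + e k) k = y k + 1 := by
    intro k y; simp [he]
  -- difference functions
  set D : Fin n → (Fin n → ℝ) → ℝ := fun k y => b k (y + e k) - b k y with hD
  have hDc : ∀ k, Continuous (D k) := by
    intro k
    rw [hD]
    exact ((hbc k).comp (continuous_id.add continuous_const)).sub (hbc k)
  have hp1 : ContDiff ℝ 1 (fun x => fderiv ℝ u₀ x (e i₁)) := c1 u₀ hu₀ _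
  have hr1 : ContDiff ℝ 1 (fun x => fderiv ℝ u₀ x (e i₂)) := c1 u₀ hu₀ _
  have ht1 : ContDiff ℝ 1 (fun x => fderiv ℝ u₁ x (e i₂)) := c1 u₁ hu₁ _
  have hv1 : ContDiff ℝ 1 (fun x => fderiv ℝ u₁ x (e i₃)) := c1 u₁ hu₁ _
  have hw1 : ContDiff ℝ 1 (fun x => fderiv ℝ u₂ x (e i₃)) := c1 u₂ hu₂ _
  -- the five integral relations
  have R1 : ∀ x, Sm (e i₀) (D i₁) x = η * β ^ 2 - Sm (e i₁) (D i₀) x := by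
    intro x
    have h := diff_swap' (fun x => fderiv ℝ u₀ x (e i₁))
      (fun y => b i₁ y + α * (η * β * y i₀)) (fun y => η * β ^ 2 * y i₀ - b i₀ y)
      hp1 (e i₀) (e i₁) pa pb x
    have l1 : (fun y => (b i₁ (y + e i₁) + α * (η * β * (y + e i₁) i₀))
        - (b i₁ y + α * (η * β * y i₀))) = D i₁ := by
      funext y; rw [cne i₁ i₀ h01 y, hD]; ring
    have l2 : (fun y => (η * β ^ 2 * (y + e i₀) i₀ - b i₀ (y + e i₀))
        - (η * β ^ 2 * y i₀ - b i₀ y)) = fun y => η * β ^ 2 - D i₀ y := by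
      funext y; rw [ceq i₀ y, hD]; ring
    rw [l1, l2] at h
    rw [h]
    exact Sm_const_sub (hDc i₀) (e i₁) (η * β ^ 2) x
  have R2 : ∀ x, Sm (e i₀) (D i₂) x = 2 * α * ϑ - Sm (e i₂) (D i₀) x := by
    intro x
    have h := diff_swap' (fun x => fderiv ℝ u₀ x (e i₂))
      (fun y => b i₂ y + α * (-(2 * ϑ) * y i₂)) (fun y => -b i₀ y)
      hr1 (e i₀) (e i₂) ra rb x
    have l1 : (fun y => (b i₂ (y + e i₂) + α * (-(2 * ϑ) * (y + e i₂) i₂))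
        - (b i₂ y + α * (-(2 * ϑ) * y i₂))) = fun y => D i₂ y + -(2 * α * ϑ) := by
      funext y; rw [ceq i₂ y, hD]; ring
    have l2 : (fun y => (-b i₀ (y + e i₀)) - (-b i₀ y)) = fun y => -D i₀ y := by
      funext y; rw [hD]; ring
    rw [l1, l2] at h
    rw [Sm_add_const (hDc i₂) (e i₀) (-(2 * α * ϑ)) x] at h
    rw [Sm_neg (e i₂) (D i₀) x] at h
    linarith
  have R3 : ∀ x, Sm (e i₁) (D i₂) x = -Sm (e i₂) (D i₁) x := by
    intro x
    have h := diff_swap' (fun x => fderiv ℝ u₁ x (e i₂))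
      (b i₂) (fun y => -b i₁ y) ht1 (e i₁) (e i₂) ta tb x
    have l1 : (fun y => b i₂ (y + e i₂) - b i₂ y) = D i₂ := by
      funext y; rw [hD]
    have l2 : (fun y => (-b i₁ (y + e i₁)) - (-b i₁ y)) = fun y => -D i₁ y := by
      funext y; rw [hD]; ring
    rw [l1, l2] at h
    rw [h]
    exact Sm_neg (e i₂) (D i₁) x
  have R4 : ∀ x, Sm (e i₁) (D i₃) x = -Sm (e i₃) (D i₁) x := by
    intro x
    have h := diff_swap' (fun x => fderiv ℝ u₁ x (e i₃))
      (b i₃) (fun y => -b i₁ y) hv1 (e i₁) (e i₃) va vb x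
    have l1 : (fun y => b i₃ (y + e i₃) - b i₃ y) = D i₃ := by
      funext y; rw [hD]
    have l2 : (fun y => (-b i₁ (y + e i₁)) - (-b i₁ y)) = fun y => -D i₁ y := by
      funext y; rw [hD]; ring
    rw [l1, l2] at h
    rw [h]
    exact Sm_neg (e i₃) (D i₁) x
  have R5 : ∀ x, Sm (e i₂) (D i₃) x = -Sm (e i₃) (D i₂) x := by
    intro x
    have h := diff_swap' (fun x => fderiv ℝ u₂ x (e i₃))
      (b i₃) (fun y => -b i₂ y) hw1 (e i₂) (e i₃) wa wb x
    have l1 : (fun y => b i₃ (y + e i₃) - b i₃ y) = D i₃ := by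
      funext y; rw [hD]
    have l2 : (fun y => (-b i₂ (y + e i₂)) - (-b i₂ y)) = fun y => -D i₂ y := by
      funext y; rw [hD]; ring
    rw [l1, l2] at h
    rw [h]
    exact Sm_neg (e i₃) (D i₂) x
  -- smear to canonical triple integrals
  have swF : ∀ (G : (Fin n → ℝ) → ℝ), Continuous G → ∀ a c : Fin n → ℝ,
      Sm a (Sm c G) = Sm c (Sm a G) := fun G hG a c => funext (Sm_swap hG a c)
  set X := Sm (e i₀) (Sm (e i₂) (Sm (e i₃) (D i₁))) 0 with hX
  set Y := Sm (e i₀) (Sm (e i₁) (Sm (e i₃) (D i₂))) 0 with hY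
  set Z := Sm (e i₀) (Sm (e i₁) (Sm (e i₂) (D i₃))) 0 with hZ
  set W := Sm (e i₁) (Sm (e i₂) (Sm (e i₃) (D i₀))) 0 with hW
  have R1f : Sm (e i₀) (D i₁) = fun x => η * β ^ 2 - Sm (e i₁) (D i₀) x := funext R1
  have R2f : Sm (e i₀) (D i₂) = fun x => 2 * α * ϑ - Sm (e i₂) (D i₀) x := funext R2
  have R3f : Sm (e i₁) (D i₂) = fun x => -Sm (e i₂) (D i₁) x := funext R3
  have R4f : Sm (e i₁) (D i₃) = fun x => -Sm (e i₃) (D i₁) x := funext R4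
  have R5f : Sm (e i₂) (D i₃) = fun x => -Sm (e i₃) (D i₂) x := funext R5
  have Eq1 : X = η * β ^ 2 - W := by
    have A1 : Sm (e i₂) (Sm (e i₃) (Sm (e i₀) (D i₁))) 0 = X := by
      rw [swF (D i₁) (hDc i₁) (e i₃) (e i₀)]
      rw [Sm_swap (Sm_cont (hDc i₁) (e i₃)) (e i₂) (e i₀) 0]
    have A2 : Sm (e i₂) (Sm (e i₃) (Sm (e i₀) (D i₁))) 0 = η * β ^ 2 - W := by
      calc Sm (e i₂) (Sm (e i₃) (Sm (e i₀) (D i₁))) 0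
          = Sm (e i₂) (Sm (e i₃) (fun x => η * β ^ 2 - Sm (e i₁) (D i₀) x)) 0 := by
            rw [R1f]
        _ = Sm (e i₂) (fun z => η * β ^ 2 - Sm (e i₃) (Sm (e i₁) (D i₀)) z) 0 := by
            congr 1; funext z
            exact Sm_const_sub (Sm_cont (hDc i₀) (e i₁)) (e i₃) _ z
        _ = η * β ^ 2 - Sm (e i₂) (Sm (e i₃) (Sm (e i₁) (D i₀))) 0 :=
            Sm_const_sub (Sm_cont (Sm_cont (hDc i₀) (e i₁)) (e i₃)) (e i₂) _ 0
        _ = η * β ^ 2 - W := by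
            rw [swF (D i₀) (hDc i₀) (e i₃) (e i₁)]
            rw [Sm_swap (Sm_cont (hDc i₀) (e i₃)) (e i₂) (e i₁) 0]
    rw [← A1, A2]
  have Eq2 : Y = 2 * α * ϑ - W := by
    have A1 : Sm (e i₁) (Sm (e i₃) (Sm (e i₀) (D i₂))) 0 = Y := by
      rw [swF (D i₂) (hDc i₂) (e i₃) (e i₀)]
      rw [Sm_swap (Sm_cont (hDc i₂) (e i₃)) (e i₁) (e i₀) 0]
    have A2 : Sm (e i₁) (Sm (e i₃) (Sm (e i₀) (D i₂))) 0 = 2 * α * ϑ - W := by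
      calc Sm (e i₁) (Sm (e i₃) (Sm (e i₀) (D i₂))) 0
          = Sm (e i₁) (Sm (e i₃) (fun x => 2 * α * ϑ - Sm (e i₂) (D i₀) x)) 0 := by
            rw [R2f]
        _ = Sm (e i₁) (fun z => 2 * α * ϑ - Sm (e i₃) (Sm (e i₂) (D i₀)) z) 0 := by
            congr 1; funext z
            exact Sm_const_sub (Sm_cont (hDc i₀) (e i₂)) (e i₃) _ z
        _ = 2 * α * ϑ - Sm (e i₁) (Sm (e i₃) (Sm (e i₂) (D i₀))) 0 :=
            Sm_const_sub (Sm_cont (Sm_cont (hDc i₀) (e i₂)) (e i₃)) (e i₁) _ 0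
        _ = 2 * α * ϑ - W := by
            rw [swF (D i₀) (hDc i₀) (e i₃) (e i₂)]
    rw [← A1, A2]
  have Eq3 : Y = -X := by
    have A1 : Sm (e i₀) (Sm (e i₃) (Sm (e i₁) (D i₂))) 0 = Y := by
      rw [swF (D i₂) (hDc i₂) (e i₃) (e i₁)]
    have A2 : Sm (e i₀) (Sm (e i₃) (Sm (e i₁) (D i₂))) 0 = -X := by
      calc Sm (e i₀) (Sm (e i₃) (Sm (e i₁) (D i₂))) 0
          = Sm (e i₀) (Sm (e i₃) (fun x => -Sm (e i₂) (D i₁) x)) 0 := by rw [R3f]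
        _ = Sm (e i₀) (fun z => -(Sm (e i₃) (Sm (e i₂) (D i₁)) z)) 0 := by
            congr 1; funext z
            exact Sm_neg (e i₃) (Sm (e i₂) (D i₁)) z
        _ = -(Sm (e i₀) (Sm (e i₃) (Sm (e i₂) (D i₁))) 0) :=
            Sm_neg (e i₀) _ 0
        _ = -X := by rw [swF (D i₁) (hDc i₁) (e i₃) (e i₂)]
    rw [← A1, A2]
  have Eq4 : Z = -X := by
    have A1 : Sm (e i₀) (Sm (e i₂) (Sm (e i₁) (D i₃))) 0 = Z := by
      rw [swF (D i₃) (hDc i₃) (e i₂) (e i₁)]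
    have A2 : Sm (e i₀) (Sm (e i₂) (Sm (e i₁) (D i₃))) 0 = -X := by
      calc Sm (e i₀) (Sm (e i₂) (Sm (e i₁) (D i₃))) 0
          = Sm (e i₀) (Sm (e i₂) (fun x => -Sm (e i₃) (D i₁) x)) 0 := by rw [R4f]
        _ = Sm (e i₀) (fun z => -(Sm (e i₂) (Sm (e i₃) (D i₁)) z)) 0 := by
            congr 1; funext z
            exact Sm_neg (e i₂) (Sm (e i₃) (D i₁)) z
        _ = -(Sm (e i₀) (Sm (e i₂) (Sm (e i₃) (D i₁))) 0) :=
            Sm_neg (e i₀) _ 0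
        _ = -X := rfl
    rw [← A1, A2]
  have Eq5 : Z = -Y := by
    have A2 : Sm (e i₀) (Sm (e i₁) (Sm (e i₂) (D i₃))) 0 = -Y := by
      calc Sm (e i₀) (Sm (e i₁) (Sm (e i₂) (D i₃))) 0
          = Sm (e i₀) (Sm (e i₁) (fun x => -Sm (e i₃) (D i₂) x)) 0 := by rw [R5f]
        _ = Sm (e i₀) (fun z => -(Sm (e i₁) (Sm (e i₃) (D i₂)) z)) 0 := by
            congr 1; funext z
            exact Sm_neg (e i₁) (Sm (e i₃) (D i₂)) z
        _ = -(Sm (e i₀) (Sm (e i₁) (Sm (e i₃) (D i₂))) 0) :=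
            Sm_neg (e i₀) _ 0
        _ = -Y := rfl
    rw [← hZ] at A2
    exact A2
  linarith

lemma fpoly_fderiv {n : ℕ} (i₀ i₁ : Fin n) (α β η ϑ : ℝ) (y v : Fin n → ℝ) :
    fderiv ℝ (fun x : Fin n → ℝ => η * x i₀ * (α * x i₀ + β * x i₁)
      - ϑ * ∑ jj ∈ Finset.univ.filter (fun jj : Fin n => 2 ≤ (jj : ℕ)), x jj ^ 2) y v
    = η * v i₀ * (α * y i₀ + β * y i₁) + η * y i₀ * (α * v i₀ + β * v i₁)
      - ϑ * ∑ jj ∈ Finset.univ.filter (fun jj : Fin n => 2 ≤ (jj : ℕ)), 2 * y jj * v jj := by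
  have hproj : ∀ k : Fin n, HasFDerivAt (fun x : Fin n → ℝ => x k)
      (ContinuousLinearMap.proj (R := ℝ) (φ := fun _ : Fin n => ℝ) k) y :=
    fun k => (ContinuousLinearMap.proj (R := ℝ) (φ := fun _ : Fin n => ℝ) k).hasFDerivAt
  have h1 := ((hproj i₀).const_mul η).mul (((hproj i₀).const_mul α).add ((hproj i₁).const_mul β))
  have hsq : ∀ jj : Fin n, HasFDerivAt (fun x : Fin n → ℝ => x jj ^ 2)
      ((y jj) • ContinuousLinearMap.proj (R := ℝ) (φ := fun _ : Fin n => ℝ) jj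
        + (y jj) • ContinuousLinearMap.proj (R := ℝ) (φ := fun _ : Fin n => ℝ) jj) y := by
    intro jj
    have h := (hproj jj).mul (hproj jj)
    simp only [pow_two]
    exact h
  have h2 := HasFDerivAt.fun_sum (fun jj (_ : jj ∈ Finset.univ.filter
      (fun jj : Fin n => 2 ≤ (jj : ℕ))) => hsq jj)
  have htot := h1.sub (h2.const_mul ϑ)
  rw [HasFDerivAt.fderiv (f := fun x : Fin n → ℝ => η * x i₀ * (α * x i₀ + β * x i₁)
      - ϑ * ∑ jj ∈ Finset.univ.filter (fun jj : Fin n => 2 ≤ (jj : ℕ)), x jj ^ 2) htot]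
  simp [ContinuousLinearMap.sum_apply, Finset.mul_sum, pow_one]
  ring_nf

lemma fpoly_diff {n : ℕ} (i₀ i₁ : Fin n) (α β η ϑ : ℝ) :
    Differentiable ℝ (fun x : Fin n → ℝ => η * x i₀ * (α * x i₀ + β * x i₁)
      - ϑ * ∑ jj ∈ Finset.univ.filter (fun jj : Fin n => 2 ≤ (jj : ℕ)), x jj ^ 2) := by
  intro y
  have hproj : ∀ k : Fin n, HasFDerivAt (fun x : Fin n → ℝ => x k)
      (ContinuousLinearMap.proj (R := ℝ) (φ := fun _ : Fin n => ℝ) k) y :=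
    fun k => (ContinuousLinearMap.proj (R := ℝ) (φ := fun _ : Fin n => ℝ) k).hasFDerivAt
  have h1 := ((hproj i₀).const_mul η).mul (((hproj i₀).const_mul α).add ((hproj i₁).const_mul β))
  have hsq : ∀ jj : Fin n, HasFDerivAt (fun x : Fin n → ℝ => x jj ^ 2)
      ((y jj) • ContinuousLinearMap.proj (R := ℝ) (φ := fun _ : Fin n => ℝ) jj
        + (y jj) • ContinuousLinearMap.proj (R := ℝ) (φ := fun _ : Fin n => ℝ) jj) y := by
    intro jj
    have h := (hproj jj).mul (hproj jj)
    simp only [pow_two]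
    exact h
  have h2 := HasFDerivAt.fun_sum (fun jj (_ : jj ∈ Finset.univ.filter
      (fun jj : Fin n => 2 ≤ (jj : ℕ))) => hsq jj)
  exact (h1.sub (h2.const_mul ϑ)).differentiableAt

/-- for `n ≥ 4` and `β ≠ 0`, if there exists `P ∈ C²(ℝⁿ;ℝⁿ)` solving
`ℰ_d P = (e₁⊗_{ℰ_d}(αe₁+βe₂))·[η x₁(αx₁+βx₂) − ϑ Σ_{j≥3} x_j²]`, then `η = 2αϑ/β²`.
(Coordinates are `0`-indexed: `i₀, i₁` are the indices `1, 2` of the paper.) -/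
theorem polynomial_solvability_constraint {n : ℕ} (hn : 4 ≤ n) (i₀ i₁ : Fin n)
    (h₀ : (i₀ : ℕ) = 0) (h₁ : (i₁ : ℕ) = 1)
    (α β η ϑ : ℝ) (hβ : β ≠ 0)
    (hex : ∃ P : (Fin n → ℝ) → (Fin n → ℝ), ContDiff ℝ 2 P ∧
      ∀ x i j, Ed P x i j =
        edT n (Pi.single i₀ 1) (α • (Pi.single i₀ 1 : Fin n → ℝ)
            + β • (Pi.single i₁ 1 : Fin n → ℝ)) i j *
          (η * x i₀ * (α * x i₀ + β * x i₁)
            - ϑ * ∑ jj ∈ Finset.univ.filter (fun jj : Fin n => 2 ≤ (jj : ℕ)), (x jj) ^ 2)) :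
    η = 2 * α * ϑ / β ^ 2 := by
  classical
  obtain ⟨P, hP, hEd⟩ := hex
  set i₂ : Fin n := ⟨2, by omega⟩ with hi₂
  set i₃ : Fin n := ⟨3, by omega⟩ with hi₃
  have hv2 : (i₂ : ℕ) = 2 := rfl
  have hv3 : (i₃ : ℕ) = 3 := rfl
  have h01 : i₀ ≠ i₁ := Fin.ne_of_val_ne (by omega)
  have h02 : i₀ ≠ i₂ := Fin.ne_of_val_ne (by omega)
  have h03 : i₀ ≠ i₃ := Fin.ne_of_val_ne (by omega)
  have h12 : i₁ ≠ i₂ := Fin.ne_of_val_ne (by omega)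
  have h13 : i₁ ≠ i₃ := Fin.ne_of_val_ne (by omega)
  have h23 : i₂ ≠ i₃ := Fin.ne_of_val_ne (by omega)
  have sapp : ∀ k j : Fin n, (Pi.single k (1:ℝ) : Fin n → ℝ) j = if j = k then 1 else 0 :=
    fun k j => Pi.single_apply k 1 j
  set fpoly : (Fin n → ℝ) → ℝ := fun x => η * x i₀ * (α * x i₀ + β * x i₁)
      - ϑ * ∑ jj ∈ Finset.univ.filter (fun jj : Fin n => 2 ≤ (jj : ℕ)), (x jj) ^ 2 with hfp
  set u : Fin n → (Fin n → ℝ) → ℝ := fun i x => P x i with hu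
  have hui : ∀ i, ContDiff ℝ 2 (u i) := fun i => contDiff_pi.mp hP i
  have hPd : Differentiable ℝ P := hP.differentiable (by norm_num)
  -- bridge pdc to coordinate functions
  have bridge : ∀ (a i : Fin n) (x : Fin n → ℝ),
      pdc a i P x = fderiv ℝ (u i) x (Pi.single a 1) := by
    intro a i x
    have h := ((ContinuousLinearMap.proj (R := ℝ) (φ := fun _ : Fin n => ℝ)
      i).hasFDerivAt.comp x (hPd x).hasFDerivAt).fderiv
    calc pdc a i P x
        = (ContinuousLinearMap.proj (R := ℝ) (φ := fun _ : Fin n => ℝ) i).comp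
            (fderiv ℝ P x) (Pi.single a 1) := rfl
      _ = fderiv ℝ ((ContinuousLinearMap.proj (R := ℝ) (φ := fun _ : Fin n => ℝ) i) ∘ P)
            x (Pi.single a 1) := by rw [h]
      _ = fderiv ℝ (u i) x (Pi.single a 1) := rfl
  -- differentiability and derivatives of the polynomial
  have hfd : Differentiable ℝ fpoly := fpoly_diff i₀ i₁ α β η ϑ
  have df1 : ∀ y, fderiv ℝ fpoly y (Pi.single i₁ 1) = η * β * y i₀ := by
    intro y
    rw [hfp, fpoly_fderiv]
    have e10 : (Pi.single i₁ (1:ℝ) : Fin n → ℝ) i₀ = 0 := by rw [sapp, if_neg h01]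
    have e11 : (Pi.single i₁ (1:ℝ) : Fin n → ℝ) i₁ = 1 := by rw [sapp, if_pos rfl]
    have hsum : ∑ jj ∈ Finset.univ.filter (fun jj : Fin n => 2 ≤ (jj : ℕ)),
        2 * y jj * (Pi.single i₁ (1:ℝ) : Fin n → ℝ) jj = 0 := by
      apply Finset.sum_eq_zero
      intro jj hjj
      have h2 : 2 ≤ (jj : ℕ) := (Finset.mem_filter.mp hjj).2
      have : jj ≠ i₁ := Fin.ne_of_val_ne (by omega)
      rw [sapp, if_neg this, mul_zero]
    rw [e10, e11, hsum]
    ring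
  have df2 : ∀ y, fderiv ℝ fpoly y (Pi.single i₂ 1) = -(2 * ϑ) * y i₂ := by
    intro y
    rw [hfp, fpoly_fderiv]
    have e20 : (Pi.single i₂ (1:ℝ) : Fin n → ℝ) i₀ = 0 := by rw [sapp, if_neg h02]
    have e21 : (Pi.single i₂ (1:ℝ) : Fin n → ℝ) i₁ = 0 := by rw [sapp, if_neg h12]
    have hsum : ∑ jj ∈ Finset.univ.filter (fun jj : Fin n => 2 ≤ (jj : ℕ)),
        2 * y jj * (Pi.single i₂ (1:ℝ) : Fin n → ℝ) jj = 2 * y i₂ := by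
      rw [Finset.sum_eq_single_of_mem i₂ (by simp [Finset.mem_filter, hv2])]
      · rw [sapp, if_pos rfl]; ring
      · intro jj _ hne
        rw [sapp, if_neg hne, mul_zero]
    rw [e20, e21, hsum]
    ring
  -- coefficient values
  set a : Fin n → ℝ := Pi.single i₀ 1 with ha
  set bb : Fin n → ℝ := α • (Pi.single i₀ 1 : Fin n → ℝ)
      + β • (Pi.single i₁ 1 : Fin n → ℝ) with hbbdef
  have a0 : a i₀ = 1 := by rw [ha, sapp, if_pos rfl]
  have a1 : a i₁ = 0 := by rw [ha, sapp, if_neg (Ne.symm h01)]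
  have a2 : a i₂ = 0 := by rw [ha, sapp, if_neg (Ne.symm h02)]
  have a3 : a i₃ = 0 := by rw [ha, sapp, if_neg (Ne.symm h03)]
  have hbb : ∀ k, bb k = α * (Pi.single i₀ (1:ℝ) : Fin n → ℝ) k + β * (Pi.single i₁ (1:ℝ) : Fin n → ℝ) k := by
    intro k; rw [hbbdef]; simp
  have bb0 : bb i₀ = α := by
    rw [hbb]; simp only [sapp]; rw [if_neg h01]; simp
  have bb1 : bb i₁ = β := by
    rw [hbb]; simp only [sapp]; rw [if_neg (Ne.symm h01)]; simp
  have bb2 : bb i₂ = 0 := by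
    rw [hbb]; simp only [sapp]; rw [if_neg (Ne.symm h02), if_neg (Ne.symm h12)]; ring
  have bb3 : bb i₃ = 0 := by
    rw [hbb]; simp only [sapp]; rw [if_neg (Ne.symm h03), if_neg (Ne.symm h13)]; ring
  have hdot : dotp a bb = α := by
    rw [dotp, Finset.sum_eq_single_of_mem i₀ (Finset.mem_univ i₀)]
    · rw [a0, bb0]; ring
    · intro k _ hk
      rw [ha]; simp only [sapp]; rw [if_neg hk, zero_mul]
  have c01 : edT n a bb i₀ i₁ = β / 2 := by
    rw [edT, a0, a1, bb0, bb1, if_neg h01]; ring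
  have c02 : edT n a bb i₀ i₂ = 0 := by
    rw [edT, a0, a2, bb0, bb2, if_neg h02]; ring
  have c12 : edT n a bb i₁ i₂ = 0 := by
    rw [edT, a1, a2, bb1, bb2, if_neg h12]; ring
  have c13 : edT n a bb i₁ i₃ = 0 := by
    rw [edT, a1, a3, bb1, bb3, if_neg h13]; ring
  have c23 : edT n a bb i₂ i₃ = 0 := by
    rw [edT, a2, a3, bb2, bb3, if_neg h23]; ring
  have c00 : edT n a bb i₀ i₀ = α - α / n := by
    rw [edT, a0, bb0, if_pos rfl, hdot]; ring
  have c11 : edT n a bb i₁ i₁ = -(α / n) := by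
    rw [edT, a1, bb1, if_pos rfl, hdot]; ring
  have c22 : edT n a bb i₂ i₂ = -(α / n) := by
    rw [edT, a2, bb2, if_pos rfl, hdot]; ring
  have c33 : edT n a bb i₃ i₃ = -(α / n) := by
    rw [edT, a3, bb3, if_pos rfl, hdot]; ring
  -- first-order consequences of the equation
  have hoff : ∀ i j : Fin n, i ≠ j → ∀ x,
      fderiv ℝ (u i) x (Pi.single j 1) + fderiv ℝ (u j) x (Pi.single i 1)
        = 2 * edT n a bb i j * fpoly x := by
    intro i j hij x
    have h := hEd x i j
    rw [Ed, if_neg hij, mul_zero, sub_zero] at h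
    have hfx : (η * x i₀ * (α * x i₀ + β * x i₁)
        - ϑ * ∑ jj ∈ Finset.univ.filter (fun jj : Fin n => 2 ≤ (jj : ℕ)), (x jj) ^ 2)
        = fpoly x := rfl
    rw [hfx] at h
    rw [← bridge j i x, ← bridge i j x]
    linear_combination 2 * h
  have hdiag : ∀ i j : Fin n, ∀ x,
      fderiv ℝ (u i) x (Pi.single i 1) - fderiv ℝ (u j) x (Pi.single j 1)
        = (edT n a bb i i - edT n a bb j j) * fpoly x := by
    intro i j x
    have hi := hEd x i i
    have hj := hEd x j j
    rw [Ed, if_pos rfl, mul_one] at hi hj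
    have hfx : (η * x i₀ * (α * x i₀ + β * x i₁)
        - ϑ * ∑ jj ∈ Finset.univ.filter (fun jj : Fin n => 2 ≤ (jj : ℕ)), (x jj) ^ 2)
        = fpoly x := rfl
    rw [hfx] at hi hj
    rw [← bridge i i x, ← bridge j j x]
    have hr : (edT n a bb i i - edT n a bb j j) * fpoly x
        = edT n a bb i i * fpoly x - edT n a bb j j * fpoly x := by ring
    rw [hr]
    linear_combination hi - hj
  -- the H-identities for `core`
  have H1 : ∀ x, fderiv ℝ (u i₀) x (Pi.single i₁ 1) + fderiv ℝ (u i₁) x (Pi.single i₀ 1)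
      = β * fpoly x := by
    intro x; rw [hoff i₀ i₁ h01 x, c01]; ring
  have H2 : ∀ x, fderiv ℝ (u i₀) x (Pi.single i₂ 1) + fderiv ℝ (u i₂) x (Pi.single i₀ 1)
      = 0 := by
    intro x; rw [hoff i₀ i₂ h02 x, c02]; ring
  have H3 : ∀ x, fderiv ℝ (u i₁) x (Pi.single i₂ 1) + fderiv ℝ (u i₂) x (Pi.single i₁ 1)
      = 0 := by
    intro x; rw [hoff i₁ i₂ h12 x, c12]; ring
  have H4 : ∀ x, fderiv ℝ (u i₁) x (Pi.single i₃ 1) + fderiv ℝ (u i₃) x (Pi.single i₁ 1)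
      = 0 := by
    intro x; rw [hoff i₁ i₃ h13 x, c13]; ring
  have H5 : ∀ x, fderiv ℝ (u i₂) x (Pi.single i₃ 1) + fderiv ℝ (u i₃) x (Pi.single i₂ 1)
      = 0 := by
    intro x; rw [hoff i₂ i₃ h23 x, c23]; ring
  have H6 : ∀ x, fderiv ℝ (u i₀) x (Pi.single i₀ 1)
      = fderiv ℝ (u i₁) x (Pi.single i₁ 1) + α * fpoly x := by
    intro x
    have h := hdiag i₀ i₁ x
    rw [c00, c11] at h
    have hr : (α - α / n - -(α / n)) * fpoly x = α * fpoly x := by ring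
    rw [hr] at h
    linarith
  have H7 : ∀ x, fderiv ℝ (u i₂) x (Pi.single i₂ 1)
      = fderiv ℝ (u i₁) x (Pi.single i₁ 1) := by
    intro x
    have h := hdiag i₂ i₁ x
    rw [c22, c11] at h
    have hr : (-(α / n) - -(α / n)) * fpoly x = 0 := by ring
    rw [hr] at h
    linarith
  have H8 : ∀ x, fderiv ℝ (u i₃) x (Pi.single i₃ 1)
      = fderiv ℝ (u i₁) x (Pi.single i₁ 1) := by
    intro x
    have h := hdiag i₃ i₁ x
    rw [c33, c11] at h
    have hr : (-(α / n) - -(α / n)) * fpoly x = 0 := by ring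
    rw [hr] at h
    linarith
  have hkey : η * β ^ 2 = 2 * α * ϑ :=
    core i₀ i₁ i₂ i₃ α β η ϑ h01 h02 (u i₀) (u i₁) (u i₂) (u i₃) fpoly
      (hui i₀) (hui i₁) (hui i₂) (hui i₃) hfd df1 df2 H1 H2 H3 H4 H5 H6 H7 H8
  have hb2 : β ^ 2 ≠ 0 := pow_ne_zero 2 hβ
  field_simp
  linarith
end

section
/- Let ℓ ∈ ℝⁿ and let (s_ε) be a family of functions of the form s_ε(x) = ψ_ε(x·ℓ) for measurable functions ψ_ε ∈ BV_loc(ℝ). If s_ε → s in L¹_loc(ℝⁿ) as ε → 0, then there exists a measurable function ψ ∈ L¹_loc(ℝ) such that s(x) = ψ(x·ℓ) for almost every x ∈ ℝⁿ. -/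
open MeasureTheory Filter Topology
open scoped ENNReal NNReal

/-- A function `f : ℝ → ℝ` has locally bounded variation. -/
def BVloc (f : ℝ → ℝ) : Prop := ∀ a b : ℝ, eVariationOn f (Set.Icc a b) ≠ ⊤

lemma measurable_dotp {n : ℕ} (ℓ : Fin n → ℝ) : Measurable (fun x : Fin n → ℝ => dotp x ℓ) :=
  Finset.measurable_sum _ fun j _ => (measurable_pi_apply j).mul_const _

lemma continuous_dotp {n : ℕ} (ℓ : Fin n → ℝ) : Continuous (fun x : Fin n → ℝ => dotp x ℓ) :=
  continuous_finset_sum _ fun j _ => (continuous_apply j).mul continuous_const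

lemma abs_le_of_BVloc {f : ℝ → ℝ} (hf : BVloc f) (a b : ℝ) :
    ∃ C : ℝ, ∀ t ∈ Set.Icc a b, |f t| ≤ C := by
  rcases le_or_gt a b with hab | hab
  · refine ⟨|f a| + (eVariationOn f (Set.Icc a b)).toReal, fun t ht => ?_⟩
    have h1 : edist (f t) (f a) ≤ eVariationOn f (Set.Icc a b) :=
      eVariationOn.edist_le f ht (Set.left_mem_Icc.2 hab)
    have h2 : dist (f t) (f a) ≤ (eVariationOn f (Set.Icc a b)).toReal := by
      rw [dist_edist]
      exact ENNReal.toReal_mono (hf a b) h1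
    calc |f t| = |f a + (f t - f a)| := by ring_nf
      _ ≤ |f a| + |f t - f a| := abs_add_le _ _
      _ ≤ |f a| + (eVariationOn f (Set.Icc a b)).toReal := by
          rw [← Real.dist_eq]; exact add_le_add_right h2 _
  · exact ⟨0, fun t ht => by rw [Set.Icc_eq_empty (not_le.2 hab)] at ht; exact ht.elim⟩

lemma integrableOn_bv_comp {n : ℕ} (ℓ : Fin n → ℝ) {f : ℝ → ℝ} (hfm : Measurable f)
    (hfbv : BVloc f) {K : Set (Fin n → ℝ)} (hK : IsCompact K) :
    IntegrableOn (fun x => f (dotp x ℓ)) K volume := by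
  obtain ⟨r, hr⟩ := (hK.image (continuous_dotp ℓ)).isBounded.subset_closedBall 0
  obtain ⟨C, hC⟩ := abs_le_of_BVloc hfbv (0 - r) (0 + r)
  refine Measure.integrableOn_of_bounded (M := C) (hK.measure_lt_top).ne
    ((hfm.comp (measurable_dotp ℓ)).aestronglyMeasurable) ?_
  refine (ae_restrict_iff' hK.measurableSet).2 (ae_of_all _ fun x hx => ?_)
  rw [Real.norm_eq_abs]
  exact hC _ (by rw [← Real.closedBall_eq_Icc]; exact hr ⟨x, hx, rfl⟩)

lemma map_affine (c : ℝ) (hc : c ≠ 0) (d : ℝ) :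
    Measure.map (fun y : ℝ => y * c + d) volume = ENNReal.ofReal |c⁻¹| • volume := by
  have : (fun y : ℝ => y * c + d) = (fun y : ℝ => y + d) ∘ (· * c) := rfl
  rw [this, ← Measure.map_map (measurable_add_const d) (measurable_mul_const c),
    Real.map_volume_mul_right hc, Measure.map_smul, map_add_right_eq_self]

lemma oned (c : ℝ) (hc : c ≠ 0) (d : ℝ) (g : ℝ → ℝ≥0∞) (hg : Measurable g)
    {D : Set ℝ} (hD : MeasurableSet D) :
    ∫⁻ t in (fun y : ℝ => y * c + d) '' D, g t
      = ENNReal.ofReal |c| * ∫⁻ y in D, g (y * c + d) := by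
  set φ : ℝ → ℝ := fun y => y * c + d with hφ
  have hφm : Measurable φ := (measurable_mul_const c).add_const d
  have hinj : Function.Injective φ := fun y z h => by
    simp only [hφ] at h
    exact mul_right_cancel₀ hc (by linarith)
  have himg : φ '' D = (fun t : ℝ => (t - d) * c⁻¹) ⁻¹' D := by
    ext t
    simp only [Set.mem_image, Set.mem_preimage]
    constructor
    · rintro ⟨y, hy, rfl⟩
      simpa [hφ, mul_assoc, mul_inv_cancel₀ hc] using hy
    · intro h
      exact ⟨(t - d) * c⁻¹, h, by simp only [hφ]; rw [mul_assoc, inv_mul_cancel₀ hc, mul_one, sub_add_cancel]⟩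
  have himgm : MeasurableSet (φ '' D) := by
    rw [himg]; exact ((measurable_sub_const d).mul_const _) hD
  have hvol : (volume : Measure ℝ) = ENNReal.ofReal |c| • Measure.map φ volume := by
    rw [map_affine c hc d, smul_smul, ← ENNReal.ofReal_mul (abs_nonneg _), abs_inv,
      mul_inv_cancel₀ (abs_ne_zero.2 hc), ENNReal.ofReal_one, one_smul]
  calc ∫⁻ t in φ '' D, g t ∂volume
      = ∫⁻ t in φ '' D, g t ∂(ENNReal.ofReal |c| • Measure.map φ volume) := by rw [← hvol]
    _ = ENNReal.ofReal |c| * ∫⁻ t in φ '' D, g t ∂(Measure.map φ volume) := by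
        rw [Measure.restrict_smul, lintegral_smul_measure, smul_eq_mul]
    _ = ENNReal.ofReal |c| * ∫⁻ t, g t ∂(Measure.map φ (volume.restrict D)) := by
        rw [Measure.restrict_map hφm himgm, Set.preimage_image_eq D hinj]
    _ = ENNReal.ofReal |c| * ∫⁻ y in D, g (φ y) := by rw [lintegral_map hg hφm]

lemma split_lemma {m : ℕ} (i : Fin (m + 1)) (F : ℝ × (Fin m → ℝ) → ℝ≥0∞) (hF : Measurable F) :
    ∫⁻ x : Fin (m + 1) → ℝ, F (x i, fun j => x (i.succAbove j))
      = ∫⁻ x' : Fin m → ℝ, ∫⁻ y : ℝ, F (y, x') := by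
  have hp := volume_preserving_piFinSuccAbove (fun _ : Fin (m + 1) => ℝ) i
  have h1 : ∫⁻ x : Fin (m + 1) → ℝ, F (x i, fun j => x (i.succAbove j))
      = ∫⁻ p : ℝ × (Fin m → ℝ), F p ∂volume := hp.lintegral_comp hF
  rw [h1, Measure.volume_eq_prod ℝ (Fin m → ℝ), lintegral_prod_symm F hF.aemeasurable]

lemma dotp_split {m : ℕ} (ℓ : Fin (m + 1) → ℝ) (i : Fin (m + 1)) (x : Fin (m + 1) → ℝ) :
    dotp x ℓ = x i * ℓ i
      + dotp (fun j => x (i.succAbove j)) (fun j => ℓ (i.succAbove j)) :=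
  Fin.sum_univ_succAbove (fun j => x j * ℓ j) i

lemma unres {m : ℕ} (ℓ : Fin (m + 1) → ℝ) (i : Fin (m + 1)) (g : ℝ → ℝ≥0∞) (hg : Measurable g) :
    ∫⁻ x : Fin (m + 1) → ℝ, g (dotp x ℓ)
      = ∫⁻ x' : Fin m → ℝ, ∫⁻ y : ℝ,
          g (y * ℓ i + dotp x' (fun j => ℓ (i.succAbove j))) := by
  have h := split_lemma i
    (fun p => g (p.1 * ℓ i + dotp p.2 (fun j => ℓ (i.succAbove j))))
    (hg.comp ((measurable_fst.mul_const _).add ((measurable_dotp _).comp measurable_snd)))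
  simpa [← dotp_split ℓ i] using h

lemma slice_lemma {m : ℕ} (ℓ : Fin (m + 1) → ℝ) (i : Fin (m + 1)) (g : ℝ → ℝ≥0∞)
    (hg : Measurable g) {D : Set ℝ} (hD : MeasurableSet D) :
    ∫⁻ x in Set.univ.pi (fun j => if j = i then D else Set.Icc 0 1), g (dotp x ℓ)
      = ∫⁻ x' in Set.univ.pi (fun _ : Fin m => Set.Icc (0:ℝ) 1),
          ∫⁻ y in D, g (y * ℓ i + dotp x' (fun j => ℓ (i.succAbove j))) := by
  classical
  set W : Set (Fin m → ℝ) := Set.univ.pi (fun _ => Set.Icc (0:ℝ) 1) with hWdef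
  have hW : MeasurableSet W := MeasurableSet.univ_pi fun _ => measurableSet_Icc
  set K : Set (Fin (m + 1) → ℝ) := Set.univ.pi (fun j => if j = i then D else Set.Icc 0 1)
    with hKdef
  have hK : MeasurableSet K := MeasurableSet.univ_pi fun j => by
    split_ifs
    exacts [hD, measurableSet_Icc]
  set F : ℝ × (Fin m → ℝ) → ℝ≥0∞ :=
    fun p => (D ×ˢ W).indicator
      (fun q => g (q.1 * ℓ i + dotp q.2 (fun j => ℓ (i.succAbove j)))) p with hFdef
  have hFmeas : Measurable F :=
    Measurable.indicator
      (hg.comp ((measurable_fst.mul_const _).add ((measurable_dotp _).comp measurable_snd)))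
      (hD.prod hW)
  have hmem : ∀ x : Fin (m + 1) → ℝ,
      x ∈ K ↔ (x i ∈ D ∧ (fun j => x (i.succAbove j)) ∈ W) := by
    intro x
    simp only [hKdef, hWdef, Set.mem_pi, Set.mem_univ, true_implies]
    constructor
    · intro h
      refine ⟨by simpa using h i, fun j => ?_⟩
      have := h (i.succAbove j)
      rwa [if_neg (Fin.succAbove_ne i j)] at this
    · rintro ⟨h1, h2⟩ j
      by_cases hj : j = i
      · subst hj; simpa using h1
      · obtain ⟨k, rfl⟩ := Fin.exists_succAbove_eq hj
        rw [if_neg (Fin.succAbove_ne i k)]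
        exact h2 k
  have hLHS : ∀ x : Fin (m + 1) → ℝ,
      K.indicator (fun x => g (dotp x ℓ)) x = F (x i, fun j => x (i.succAbove j)) := by
    intro x
    have hiff : ((x i, fun j => x (i.succAbove j)) ∈ D ×ˢ W) ↔ x ∈ K := by
      rw [hmem x]; exact Set.mem_prod
    simp only [hFdef, Set.indicator_apply]
    by_cases hx : x ∈ K
    · rw [if_pos hx, if_pos (hiff.2 hx), dotp_split ℓ i x]
    · rw [if_neg hx, if_neg (fun h => hx (hiff.1 h))]
  calc ∫⁻ x in K, g (dotp x ℓ)
      = ∫⁻ x, K.indicator (fun x => g (dotp x ℓ)) x := (lintegral_indicator hK _).symm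
    _ = ∫⁻ x : Fin (m + 1) → ℝ, F (x i, fun j => x (i.succAbove j)) :=
        lintegral_congr hLHS
    _ = ∫⁻ x', ∫⁻ y, F (y, x') := split_lemma i F hFmeas
    _ = ∫⁻ x', W.indicator
          (fun x' => ∫⁻ y in D, g (y * ℓ i + dotp x' (fun j => ℓ (i.succAbove j)))) x' := by
        refine lintegral_congr fun x' => ?_
        by_cases hx' : x' ∈ W
        · rw [Set.indicator_of_mem hx']
          have hFy : ∀ y, F (y, x')
              = D.indicator (fun y => g (y * ℓ i + dotp x' (fun j => ℓ (i.succAbove j)))) y := by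
            intro y
            simp only [hFdef, Set.indicator_apply, Set.mem_prod]
            by_cases hy : y ∈ D
            · rw [if_pos ⟨hy, hx'⟩, if_pos hy]
            · rw [if_neg (fun h => hy h.1), if_neg hy]
          simp_rw [hFy]
          exact lintegral_indicator hD _
        · rw [Set.indicator_of_notMem hx']
          have hFy : ∀ y, F (y, x') = 0 := by
            intro y
            simp only [hFdef, Set.indicator_apply, Set.mem_prod]
            rw [if_neg (fun h => hx' h.2)]
          simp_rw [hFy]
          exact lintegral_zero
    _ = _ := lintegral_indicator hW _

lemma lintegral_indicator_comp {α : Type*} [MeasurableSpace α] {μ : Measure α} {T : α → ℝ}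
    (hT : Measurable T) {N : Set ℝ} (hN : MeasurableSet N) :
    ∫⁻ x, N.indicator (fun _ => (1:ℝ≥0∞)) (T x) ∂μ = μ (T ⁻¹' N) := by
  have h : ∀ x, N.indicator (fun _ => (1:ℝ≥0∞)) (T x)
      = (T ⁻¹' N).indicator (fun _ => (1:ℝ≥0∞)) x := by
    intro x
    by_cases hx : T x ∈ N
    · rw [Set.indicator_of_mem hx]
      exact (Set.indicator_of_mem (Set.mem_preimage.2 hx) (fun _ => (1:ℝ≥0∞))).symm
    · rw [Set.indicator_of_notMem hx]
      exact (Set.indicator_of_notMem (s := T ⁻¹' N) (fun h => hx (Set.mem_preimage.1 h))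
        (fun _ => (1:ℝ≥0∞))).symm
  rw [lintegral_congr h, lintegral_indicator (hT hN), setLIntegral_one]

/-- if `s_ε(x) = ψ_ε(x·ℓ)` with `ψ_ε` measurable and in `BV_loc(ℝ)`,
and `s_ε → s` in `L¹_loc(ℝⁿ)` as `ε → 0⁺`, then `s(x) = ψ(x·ℓ)` a.e. for some
measurable `ψ ∈ L¹_loc(ℝ)`. -/
theorem one_dimensional_structure_limit {n : ℕ} (ℓ : Fin n → ℝ)
    (ψ : ℝ → ℝ → ℝ) (s : (Fin n → ℝ) → ℝ)
    (hψmeas : ∀ ε ∈ Set.Ioi (0 : ℝ), Measurable (ψ ε))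
    (hψBV : ∀ ε ∈ Set.Ioi (0 : ℝ), BVloc (ψ ε))
    (hs : LocallyIntegrable s (volume : Measure (Fin n → ℝ)))
    (hconv : ∀ K : Set (Fin n → ℝ), IsCompact K →
      Tendsto (fun ε : ℝ => ∫ x in K, |ψ ε (dotp x ℓ) - s x|)
        (nhdsWithin 0 (Set.Ioi 0)) (nhds 0)) :
    ∃ ψ₀ : ℝ → ℝ, Measurable ψ₀ ∧ LocallyIntegrable ψ₀ (volume : Measure ℝ) ∧
      ∀ᵐ x : Fin n → ℝ, s x = ψ₀ (dotp x ℓ) := by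
  classical
  -- Step 0: select a sequence εₖ → 0⁺ with fast L¹ convergence on balls
  have hsel : ∀ k : ℕ, ∃ ε : ℝ, ε ∈ Set.Ioi (0:ℝ) ∧
      ∫ x in Metric.closedBall (0 : Fin n → ℝ) k, |ψ ε (dotp x ℓ) - s x| < (1/2 : ℝ)^k := by
    intro k
    have h0 : (0:ℝ) < (1/2)^k := by positivity
    have h1 := (hconv _ (isCompact_closedBall (0 : Fin n → ℝ) k)).eventually_lt_const h0
    have h2 : ∀ᶠ ε in 𝓝[>] (0:ℝ), ε ∈ Set.Ioi (0:ℝ) := eventually_mem_nhdsWithin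
    exact ((h2.and h1).exists).imp fun ε h => ⟨h.1, h.2⟩
  choose εs hεpos hεlt using hsel
  set u : ℕ → ℝ → ℝ := fun k => ψ (εs k) with hu
  have humeas : ∀ k, Measurable (u k) := fun k => hψmeas _ (hεpos k)
  have huint : ∀ (k : ℕ) (K : Set (Fin n → ℝ)), IsCompact K →
      IntegrableOn (fun x => u k (dotp x ℓ) - s x) K volume := fun k K hK =>
    (integrableOn_bv_comp ℓ (humeas k) (hψBV _ (hεpos k)) hK).sub (hs.integrableOn_isCompact hK)
  have hlint : ∀ k : ℕ, ∫⁻ x in Metric.closedBall (0 : Fin n → ℝ) k,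
      (‖u k (dotp x ℓ) - s x‖₊ : ℝ≥0∞) ≤ ENNReal.ofReal ((1/2 : ℝ)^k) := by
    intro k
    simp only [← enorm_eq_nnnorm]
    rw [← ofReal_integral_norm_eq_lintegral_enorm (huint k _ (isCompact_closedBall _ _))]
    apply ENNReal.ofReal_le_ofReal
    refine le_of_eq_of_le ?_ (hεlt k).le
    simp [Real.norm_eq_abs, hu]
  -- Step 1: a.e. convergence in x
  have hxconv : ∀ᵐ x : Fin n → ℝ, Tendsto (fun k => u k (dotp x ℓ)) atTop (𝓝 (s x)) := by
    have hR : ∀ R : ℕ, ∀ᵐ x ∂(volume.restrict (Metric.closedBall (0 : Fin n → ℝ) R)),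
        Tendsto (fun k => u k (dotp x ℓ)) atTop (𝓝 (s x)) := by
      intro R
      set μR := volume.restrict (Metric.closedBall (0 : Fin n → ℝ) R) with hμR
      have hmeask : ∀ k : ℕ, AEMeasurable (fun x => (‖u k (dotp x ℓ) - s x‖₊ : ℝ≥0∞)) μR := by
        intro k
        exact ((((humeas k).comp (measurable_dotp ℓ)).aemeasurable.sub
          (hs.aestronglyMeasurable.aemeasurable.restrict)).aestronglyMeasurable).enorm
      have hsum : ∫⁻ x, ∑' k : ℕ, (‖u (k + R) (dotp x ℓ) - s x‖₊ : ℝ≥0∞) ∂μR ≠ ⊤ := by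
        rw [lintegral_tsum (fun k => hmeask (k + R))]
        have hb : ∀ k : ℕ, ∫⁻ x, (‖u (k + R) (dotp x ℓ) - s x‖₊ : ℝ≥0∞) ∂μR
            ≤ ENNReal.ofReal ((1/2 : ℝ)^k) := by
          intro k
          calc ∫⁻ x, (‖u (k + R) (dotp x ℓ) - s x‖₊ : ℝ≥0∞) ∂μR
              ≤ ∫⁻ x in Metric.closedBall (0 : Fin n → ℝ) (k + R),
                  (‖u (k + R) (dotp x ℓ) - s x‖₊ : ℝ≥0∞) := by
                rw [hμR]
                refine lintegral_mono_set (Metric.closedBall_subset_closedBall ?_)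
                exact_mod_cast Nat.le_add_left R k
            _ ≤ ENNReal.ofReal ((1/2 : ℝ)^(k + R)) := by exact_mod_cast hlint (k + R)
            _ ≤ ENNReal.ofReal ((1/2 : ℝ)^k) := by
                apply ENNReal.ofReal_le_ofReal
                exact pow_le_pow_of_le_one (by norm_num) (by norm_num) (Nat.le_add_right k R)
        refine ne_top_of_le_ne_top ?_ (ENNReal.tsum_le_tsum hb)
        rw [← ENNReal.ofReal_tsum_of_nonneg (fun k => by positivity) summable_geometric_two]
        exact ENNReal.ofReal_ne_top
      have hae := ae_lt_top' (AEMeasurable.ennreal_tsum fun k => hmeask (k + R)) hsum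
      filter_upwards [hae] with x hx
      have h1 : Tendsto (fun k => (‖u (k + R) (dotp x ℓ) - s x‖₊ : ℝ≥0∞)) atTop (𝓝 0) :=
        ENNReal.tendsto_atTop_zero_of_tsum_ne_top hx.ne
      have h2 : Tendsto (fun k => |u (k + R) (dotp x ℓ) - s x|) atTop (𝓝 0) := by
        have h3 := (ENNReal.tendsto_toReal (by simp : (0:ℝ≥0∞) ≠ ⊤)).comp h1
        simpa [Function.comp_def, Real.norm_eq_abs] using h3
      have h4 : Tendsto (fun k => |u k (dotp x ℓ) - s x|) atTop (𝓝 0) :=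
        (tendsto_add_atTop_iff_nat R).1 h2
      rw [tendsto_iff_dist_tendsto_zero]
      simpa [Real.dist_eq] using h4
    have hbadR : ∀ R : ℕ, volume ({x : Fin n → ℝ |
        ¬ Tendsto (fun k => u k (dotp x ℓ)) atTop (𝓝 (s x))} ∩ Metric.closedBall 0 R) = 0 := by
      intro R
      have h := hR R
      rw [ae_iff] at h
      rwa [Measure.restrict_apply' measurableSet_closedBall] at h
    rw [ae_iff]
    refine measure_mono_null (fun x hx => ?_) (measure_iUnion_null fun R : ℕ => hbadR R)
    refine Set.mem_iUnion.2 ⟨⌈‖x‖⌉₊, hx, ?_⟩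
    rw [Metric.mem_closedBall, dist_zero_right]
    exact le_trans (Nat.le_ceil ‖x‖) (by exact_mod_cast le_refl _)
  -- Degenerate case: ℓ = 0
  by_cases hiz : ∃ i, ℓ i ≠ 0
  swap
  · push_neg at hiz
    have hT0 : ∀ x : Fin n → ℝ, dotp x ℓ = 0 := fun x => by simp [dotp, hiz]
    have hvol : (volume : Measure (Fin n → ℝ)) ≠ 0 := by
      intro h
      have h2 : (volume : Measure (Fin n → ℝ)) Set.univ = 0 := by rw [h]; rfl
      rw [volume_pi, Measure.pi_univ] at h2
      simp only [Real.volume_univ, Finset.prod_const] at h2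
      exact pow_ne_zero _ ENNReal.top_ne_zero h2
    haveI : (ae (volume : Measure (Fin n → ℝ))).NeBot := ae_neBot.2 hvol
    obtain ⟨x₀, hx₀⟩ := hxconv.exists
    refine ⟨fun _ => s x₀, measurable_const, locallyIntegrable_const _, ?_⟩
    filter_upwards [hxconv] with x hx
    have h1 : Tendsto (fun k => u k (dotp x ℓ)) atTop (𝓝 (s x₀)) := by
      rw [hT0 x]
      rw [hT0 x₀] at hx₀
      exact hx₀
    exact tendsto_nhds_unique hx h1
  -- Main case
  obtain ⟨i, hi⟩ := hiz
  obtain ⟨m, rfl⟩ : ∃ m, n = m + 1 := ⟨n - 1, by have := i.isLt; omega⟩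
  have hℓipos : 0 < |ℓ i| := abs_pos.2 hi
  have hofR0 : ENNReal.ofReal |ℓ i| ≠ 0 := (ENNReal.ofReal_pos.2 hℓipos).ne'
  have hofRtop : ENNReal.ofReal |ℓ i| ≠ ⊤ := ENNReal.ofReal_ne_top
  set M : ℝ := ∑ j : Fin m, |ℓ (i.succAbove j)| with hM
  have hM0 : 0 ≤ M := Finset.sum_nonneg fun j _ => abs_nonneg _
  set W : Set (Fin m → ℝ) := Set.univ.pi (fun _ => Set.Icc (0:ℝ) 1) with hW
  have hWmeas : MeasurableSet W := MeasurableSet.univ_pi fun _ => measurableSet_Icc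
  have hWvol : volume W = 1 := by
    rw [hW, volume_pi_pi]
    simp [Real.volume_Icc]
  have hMb : ∀ x' ∈ W, |dotp x' (fun j => ℓ (i.succAbove j))| ≤ M := by
    intro x' hx'
    rw [hM]
    refine (Finset.abs_sum_le_sum_abs _ _).trans (Finset.sum_le_sum fun j _ => ?_)
    rw [abs_mul]
    have hj : x' j ∈ Set.Icc (0:ℝ) 1 := hx' j (Set.mem_univ j)
    have h1 : |x' j| ≤ 1 := abs_le.2 ⟨by linarith [hj.1], hj.2⟩
    calc |x' j| * |ℓ (i.succAbove j)| ≤ 1 * |ℓ (i.succAbove j)| :=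
          mul_le_mul_of_nonneg_right h1 (abs_nonneg _)
      _ = _ := one_mul _
  set R : ℝ → ℝ → ℝ := fun a b => (|a| + |b| + M) / |ℓ i| with hRdef
  set box : ℝ → ℝ → Set (Fin (m+1) → ℝ) := fun a b =>
    Set.univ.pi (fun j => if j = i then Set.Icc (-(R a b)) (R a b) else Set.Icc 0 1) with hbox
  have hboxcpt : ∀ a b, IsCompact (box a b) := fun a b =>
    isCompact_univ_pi fun j => by split_ifs <;> exact isCompact_Icc
  have hboxmeas : ∀ a b, MeasurableSet (box a b) := fun a b =>
    MeasurableSet.univ_pi fun j => by split_ifs <;> exact measurableSet_Icc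
  have hsub : ∀ (a b d : ℝ), |d| ≤ M →
      Set.Icc a b ⊆ (fun y : ℝ => y * ℓ i + d) '' Set.Icc (-(R a b)) (R a b) := by
    intro a b d hd t ht
    refine ⟨(t - d) / ℓ i, ?_, by field_simp; ring⟩
    have htd : |t - d| ≤ |a| + |b| + M := by
      have h1 : |t| ≤ |a| + |b| := by
        rw [abs_le]
        constructor
        · linarith [neg_abs_le a, ht.1, abs_nonneg b]
        · linarith [le_abs_self b, ht.2, abs_nonneg a]
      calc |t - d| ≤ |t| + |d| := abs_sub _ _
        _ ≤ |a| + |b| + M := by linarith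
    rw [Set.mem_Icc, ← abs_le, abs_div]
    have hfin : |t - d| / |ℓ i| ≤ (|a| + |b| + M) / |ℓ i| := by gcongr
    exact hfin
  -- key upper bound via Fubini
  have hup : ∀ (a b : ℝ) (g : ℝ → ℝ≥0∞), Measurable g →
      ∫⁻ t in Set.Icc a b, g t
        ≤ ENNReal.ofReal |ℓ i| * ∫⁻ x in box a b, g (dotp x ℓ) := by
    intro a b g hg
    have hslice := slice_lemma ℓ i g hg (measurableSet_Icc (a := -(R a b)) (b := R a b))
    have hinner : ∀ x' ∈ W, (ENNReal.ofReal |ℓ i|)⁻¹ * ∫⁻ t in Set.Icc a b, g t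
        ≤ ∫⁻ y in Set.Icc (-(R a b)) (R a b),
            g (y * ℓ i + dotp x' (fun j => ℓ (i.succAbove j))) := by
      intro x' hx'
      have h1 : ∫⁻ t in Set.Icc a b, g t
          ≤ ∫⁻ t in (fun y : ℝ => y * ℓ i + dotp x' (fun j => ℓ (i.succAbove j))) ''
              Set.Icc (-(R a b)) (R a b), g t :=
        lintegral_mono_set (hsub a b _ (hMb x' hx'))
      rw [oned (ℓ i) hi _ g hg measurableSet_Icc] at h1
      calc (ENNReal.ofReal |ℓ i|)⁻¹ * ∫⁻ t in Set.Icc a b, g t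
          ≤ (ENNReal.ofReal |ℓ i|)⁻¹ * (ENNReal.ofReal |ℓ i| *
              ∫⁻ y in Set.Icc (-(R a b)) (R a b),
                g (y * ℓ i + dotp x' (fun j => ℓ (i.succAbove j)))) :=
            mul_le_mul_right h1 _
        _ = _ := by rw [← mul_assoc, ENNReal.inv_mul_cancel hofR0 hofRtop, one_mul]
    have h2 : (ENNReal.ofReal |ℓ i|)⁻¹ * ∫⁻ t in Set.Icc a b, g t
        ≤ ∫⁻ x in box a b, g (dotp x ℓ) := by
      rw [hbox]
      rw [hslice]
      calc (ENNReal.ofReal |ℓ i|)⁻¹ * ∫⁻ t in Set.Icc a b, g t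
          = ∫⁻ _ in W, ((ENNReal.ofReal |ℓ i|)⁻¹ * ∫⁻ t in Set.Icc a b, g t) ∂volume := by
            rw [setLIntegral_const, hWvol, mul_one]
        _ ≤ _ := setLIntegral_mono' hWmeas hinner
    calc ∫⁻ t in Set.Icc a b, g t
        = ENNReal.ofReal |ℓ i| * ((ENNReal.ofReal |ℓ i|)⁻¹ * ∫⁻ t in Set.Icc a b, g t) := by
          rw [← mul_assoc, ENNReal.mul_inv_cancel hofR0 hofRtop, one_mul]
      _ ≤ _ := mul_le_mul_right h2 _
  -- downward null transfer
  have hdown : ∀ N : Set ℝ, MeasurableSet N → volume N = 0 →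
      volume ((fun x : Fin (m+1) → ℝ => dotp x ℓ) ⁻¹' N) = 0 := by
    intro N hN hN0
    have hind : Measurable (N.indicator (fun _ => (1:ℝ≥0∞))) := measurable_const.indicator hN
    have h1 : ∫⁻ x : Fin (m+1) → ℝ, N.indicator (fun _ => (1:ℝ≥0∞)) (dotp x ℓ) = 0 := by
      rw [unres ℓ i _ hind]
      have hin : ∀ x' : Fin m → ℝ, ∫⁻ y : ℝ,
          N.indicator (fun _ => (1:ℝ≥0∞))
            (y * ℓ i + dotp x' (fun j => ℓ (i.succAbove j))) = 0 := by
        intro x'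
        have hφ : Measurable (fun y : ℝ =>
            y * ℓ i + dotp x' (fun j => ℓ (i.succAbove j))) :=
          (measurable_mul_const _).add_const _
        rw [← lintegral_map hind hφ, map_affine (ℓ i) hi _, lintegral_smul_measure,
          lintegral_indicator (hN) , setLIntegral_one, hN0, smul_zero]
      simp_rw [hin]
      exact lintegral_zero
    calc volume ((fun x : Fin (m+1) → ℝ => dotp x ℓ) ⁻¹' N)
        = ∫⁻ x : Fin (m+1) → ℝ, N.indicator (fun _ => (1:ℝ≥0∞)) (dotp x ℓ) :=
          (lintegral_indicator_comp (measurable_dotp ℓ) hN).symm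
      _ = 0 := h1
  -- a.e. t convergence
  have hBmeas : MeasurableSet {t : ℝ | ∃ c : ℝ, Tendsto (fun k => u k t) atTop (𝓝 c)} :=
    measurableSet_exists_tendsto humeas
  have hpre0 : volume ((fun x : Fin (m+1) → ℝ => dotp x ℓ) ⁻¹'
      {t : ℝ | ∃ c : ℝ, Tendsto (fun k => u k t) atTop (𝓝 c)}ᶜ) = 0 := by
    refine measure_mono_null (fun x hx => ?_) (ae_iff.1 hxconv)
    intro hcon
    exact hx ⟨s x, hcon⟩
  have hBc0 : volume ({t : ℝ | ∃ c : ℝ, Tendsto (fun k => u k t) atTop (𝓝 c)}ᶜ) = 0 := by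
    set Bc := {t : ℝ | ∃ c : ℝ, Tendsto (fun k => u k t) atTop (𝓝 c)}ᶜ with hBc
    have hBcm : MeasurableSet Bc := hBmeas.compl
    have hIcc0 : ∀ r : ℕ, volume (Bc ∩ Set.Icc (-(r:ℝ)) r) = 0 := by
      intro r
      have h := hup (-(r:ℝ)) r (Bc.indicator fun _ => 1) (measurable_const.indicator hBcm)
      have hL : ∫⁻ t in Set.Icc (-(r:ℝ)) r, Bc.indicator (fun _ => (1:ℝ≥0∞)) t
          = volume (Bc ∩ Set.Icc (-(r:ℝ)) r) := by
        rw [lintegral_indicator hBcm, setLIntegral_one, Measure.restrict_apply hBcm]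
      have hRHS : ∫⁻ x in box (-(r:ℝ)) r, Bc.indicator (fun _ => (1:ℝ≥0∞)) (dotp x ℓ) = 0 := by
        refine le_antisymm ?_ (zero_le)
        calc ∫⁻ x in box (-(r:ℝ)) r, Bc.indicator (fun _ => (1:ℝ≥0∞)) (dotp x ℓ)
            ≤ ∫⁻ x : Fin (m+1) → ℝ, Bc.indicator (fun _ => (1:ℝ≥0∞)) (dotp x ℓ) :=
              setLIntegral_le_lintegral _ _
          _ = volume ((fun x : Fin (m+1) → ℝ => dotp x ℓ) ⁻¹' Bc) :=
              lintegral_indicator_comp (measurable_dotp ℓ) hBcm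
          _ = 0 := hpre0
      rw [hL, hRHS, mul_zero] at h
      exact le_antisymm h (zero_le)
    refine measure_mono_null (fun t ht => ?_) (measure_iUnion_null hIcc0)
    refine Set.mem_iUnion.2 ⟨⌈|t|⌉₊, ht, ?_⟩
    constructor
    · linarith [neg_abs_le t, Nat.le_ceil |t|]
    · linarith [le_abs_self t, Nat.le_ceil |t|]
  have hN1 : ∀ᵐ t : ℝ, ∃ c : ℝ, Tendsto (fun k => u k t) atTop (𝓝 c) := by
    rw [ae_iff]
    rw [← Set.compl_setOf]
    exact hBc0
  obtain ⟨ψ₀, hψ₀meas, hψ₀lim⟩ := measurable_limit_of_tendsto_metrizable_ae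
    (μ := (volume : Measure ℝ)) (L := atTop) (fun k => (humeas k).aemeasurable) hN1
  obtain ⟨N, hNsup, hNmeas, hN0⟩ := exists_measurable_superset_of_null (ae_iff.1 hψ₀lim)
  have hpre : volume ((fun x : Fin (m+1) → ℝ => dotp x ℓ) ⁻¹' N) = 0 := hdown N hNmeas hN0
  have hae2 : ∀ᵐ x : Fin (m+1) → ℝ,
      Tendsto (fun k => u k (dotp x ℓ)) atTop (𝓝 (ψ₀ (dotp x ℓ))) := by
    rw [ae_iff]
    refine measure_mono_null (fun x hx => ?_) hpre
    exact hNsup hx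
  refine ⟨ψ₀, hψ₀meas, ?_, ?_⟩
  · rw [locallyIntegrable_iff]
    intro Kc hKc
    obtain ⟨r, hr⟩ := hKc.isBounded.subset_closedBall 0
    have hrsub : Kc ⊆ Set.Icc (-r) r := by
      intro t ht
      have h2 := hr ht
      rwa [Real.closedBall_eq_Icc, zero_sub, zero_add] at h2
    refine IntegrableOn.mono_set ?_ hrsub
    refine ⟨hψ₀meas.aestronglyMeasurable.restrict, ?_⟩
    have hcong : ∀ᵐ t ∂(volume.restrict (Set.Icc (-r) r)), (‖ψ₀ t‖₊ : ℝ≥0∞)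
        = liminf (fun k => (‖u k t‖₊ : ℝ≥0∞)) atTop := by
      filter_upwards [ae_restrict_of_ae hψ₀lim] with t ht
      exact ((ENNReal.tendsto_coe.2 ht.nnnorm).liminf_eq).symm
    rw [hasFiniteIntegral_def]
    simp only [enorm_eq_nnnorm]
    rw [lintegral_congr_ae hcong]
    have hA : ∫⁻ x in box (-r) r, (‖s x‖₊ : ℝ≥0∞) ≠ ⊤ :=
      ((hasFiniteIntegral_def _ _).1 (hs.integrableOn_isCompact (hboxcpt (-r) r)).2).ne
    have hev : ∀ᶠ k in atTop, ∫⁻ t in Set.Icc (-r) r, (‖u k t‖₊ : ℝ≥0∞)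
        ≤ ENNReal.ofReal |ℓ i| * (1 + ∫⁻ x in box (-r) r, (‖s x‖₊ : ℝ≥0∞)) := by
      filter_upwards [eventually_ge_atTop ⌈max (R (-r) r) 1⌉₊] with k hk
      have hboxsub : box (-r) r ⊆ Metric.closedBall (0 : Fin (m+1) → ℝ) k := by
        intro x hx
        rw [Metric.mem_closedBall, dist_zero_right]
        rw [pi_norm_le_iff_of_nonneg (by positivity)]
        intro j
        have hxj : x j ∈ (if j = i then Set.Icc (-(R (-r) r)) (R (-r) r)
            else Set.Icc (0:ℝ) 1) := hx j (Set.mem_univ j)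
        rw [Real.norm_eq_abs]
        have hRk : max (R (-r) r) 1 ≤ (k : ℝ) :=
          le_trans (Nat.le_ceil _) (by exact_mod_cast hk)
        by_cases hj : j = i
        · rw [if_pos hj] at hxj
          have := abs_le.2 ⟨hxj.1, hxj.2⟩
          exact this.trans ((le_max_left _ _).trans hRk)
        · rw [if_neg hj] at hxj
          have : |x j| ≤ 1 := abs_le.2 ⟨by linarith [hxj.1], hxj.2⟩
          exact this.trans ((le_max_right _ _).trans hRk)
      have hb1 : ∫⁻ x in box (-r) r, (‖u k (dotp x ℓ) - s x‖₊ : ℝ≥0∞) ≤ 1 := by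
        refine le_trans (lintegral_mono_set hboxsub) ((hlint k).trans ?_)
        refine ENNReal.ofReal_le_one.2 ?_
        exact pow_le_one₀ (by norm_num) (by norm_num)
      have haem : AEMeasurable (fun x => (‖u k (dotp x ℓ) - s x‖₊ : ℝ≥0∞))
          (volume.restrict (box (-r) r)) :=
        ((((humeas k).comp (measurable_dotp ℓ)).aemeasurable.sub
          (hs.aestronglyMeasurable.aemeasurable.restrict)).aestronglyMeasurable).enorm
      have htri : ∫⁻ x in box (-r) r, (‖u k (dotp x ℓ)‖₊ : ℝ≥0∞)
          ≤ 1 + ∫⁻ x in box (-r) r, (‖s x‖₊ : ℝ≥0∞) := by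
        calc ∫⁻ x in box (-r) r, (‖u k (dotp x ℓ)‖₊ : ℝ≥0∞)
            ≤ ∫⁻ x in box (-r) r,
                ((‖u k (dotp x ℓ) - s x‖₊ : ℝ≥0∞) + (‖s x‖₊ : ℝ≥0∞)) := by
              refine lintegral_mono fun x => ?_
              have heq : u k (dotp x ℓ) = (u k (dotp x ℓ) - s x) + s x := by ring
              calc (‖u k (dotp x ℓ)‖₊ : ℝ≥0∞)
                  = (‖(u k (dotp x ℓ) - s x) + s x‖₊ : ℝ≥0∞) := by rw [← heq]
                _ ≤ _ := by
                    rw [← ENNReal.coe_add]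
                    exact_mod_cast nnnorm_add_le _ _
          _ = (∫⁻ x in box (-r) r, (‖u k (dotp x ℓ) - s x‖₊ : ℝ≥0∞))
              + ∫⁻ x in box (-r) r, (‖s x‖₊ : ℝ≥0∞) := lintegral_add_left' haem _
          _ ≤ _ := add_le_add_left hb1 _
      calc ∫⁻ t in Set.Icc (-r) r, (‖u k t‖₊ : ℝ≥0∞)
          ≤ ENNReal.ofReal |ℓ i| * ∫⁻ x in box (-r) r, (‖u k (dotp x ℓ)‖₊ : ℝ≥0∞) :=
            hup (-r) r _ ((humeas k).nnnorm.coe_nnreal_ennreal)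
        _ ≤ _ := mul_le_mul_right htri _
    calc ∫⁻ t in Set.Icc (-r) r, liminf (fun k => (‖u k t‖₊ : ℝ≥0∞)) atTop
        ≤ liminf (fun k => ∫⁻ t in Set.Icc (-r) r, (‖u k t‖₊ : ℝ≥0∞)) atTop :=
          lintegral_liminf_le fun k => (humeas k).nnnorm.coe_nnreal_ennreal
      _ ≤ ENNReal.ofReal |ℓ i| * (1 + ∫⁻ x in box (-r) r, (‖s x‖₊ : ℝ≥0∞)) :=
          liminf_le_of_frequently_le' hev.frequently
      _ < ⊤ := ENNReal.mul_lt_top hofRtop.lt_top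
          (ENNReal.add_lt_top.2 ⟨ENNReal.one_lt_top, hA.lt_top⟩)
  · filter_upwards [hxconv, hae2] with x h1 h2
    exact tendsto_nhds_unique h1 h2
end
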